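/- arXiv:1904.09929 — 7 statements merged into one kernel-verified Lean document; each statement's English description precedes it below -/
import Mathlib

section
/- Let N be a geometric random variable with P(N=k) = r(1-r)^k for k ≥ 0, independent of a sequence of integrable random variables (Δ_m), and suppose the series ∑_{m=0}^∞ E[Δ_m] converges absolutely to θ. Define Z = Δ_N / P(N=N). Then E[Z] = θ. -/
open MeasureTheory ProbabilityTheory

/-- Unbiasedness of the single-term randomized multilevel estimator `Z = Δ_N / p(N)`. -/
theorem stmt_0 {Ω : Type*} [MeasurableSpace Ω] (μ : Measure Ω) [IsProbabilityMeasure μ]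
    (r : ℝ) (hr : r ∈ Set.Ioo (0 : ℝ) 1)
    (N : Ω → ℕ) (hN : Measurable N)
    (hgeo : ∀ k : ℕ, μ {ω | N ω = k} = ENNReal.ofReal (r * (1 - r) ^ k))
    (Δ : ℕ → Ω → ℝ) (hΔmeas : ∀ m, Measurable (Δ m))
    (hΔint : ∀ m, Integrable (Δ m) μ)
    (hindep : IndepFun N (fun ω => fun m => Δ m ω) μ)
    (θ : ℝ)
    (habs : Summable fun m => ∫ ω, |Δ m ω| ∂μ)
    (hsum : ∑' m : ℕ, ∫ ω, Δ m ω ∂μ = θ)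
    (hZint : Integrable (fun ω => Δ (N ω) ω / (r * (1 - r) ^ (N ω))) μ) :
    ∫ ω, Δ (N ω) ω / (r * (1 - r) ^ (N ω)) ∂μ = θ := by
  obtain ⟨hr0, hr1⟩ := hr
  have hp : ∀ k : ℕ, 0 < r * (1 - r) ^ k := fun k =>
    mul_pos hr0 (pow_pos (by linarith) k)
  have hmeas : ∀ k : ℕ, MeasurableSet {ω | N ω = k} := fun k => hN (measurableSet_singleton k)
  have hdisj : Pairwise (Function.onFun Disjoint fun k : ℕ => {ω | N ω = k}) := by
    intro i j hij
    simp only [Function.onFun, Set.disjoint_left, Set.mem_setOf_eq]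
    intro ω h1 h2
    exact hij (h1 ▸ h2)
  have hunion : (⋃ k : ℕ, {ω | N ω = k}) = Set.univ := by
    ext ω; simp
  have h1 : ∫ ω, Δ (N ω) ω / (r * (1 - r) ^ (N ω)) ∂μ
      = ∑' k : ℕ, ∫ ω in {ω | N ω = k}, Δ (N ω) ω / (r * (1 - r) ^ (N ω)) ∂μ := by
    rw [← setIntegral_univ, ← hunion, integral_iUnion hmeas hdisj]
    rw [hunion]
    exact hZint.integrableOn
  have h2 : ∀ k : ℕ, ∫ ω in {ω | N ω = k}, Δ (N ω) ω / (r * (1 - r) ^ (N ω)) ∂μ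
      = ∫ ω, Δ k ω ∂μ := by
    intro k
    have heq : ∀ ω ∈ {ω | N ω = k}, Δ (N ω) ω / (r * (1 - r) ^ (N ω))
        = Δ k ω / (r * (1 - r) ^ k) := by
      intro ω hω
      simp only [Set.mem_setOf_eq] at hω
      rw [hω]
    rw [setIntegral_congr_fun (hmeas k) heq, integral_div]
    -- independence step
    have hind : IndepFun (fun ω => Set.indicator ({k} : Set ℕ) (fun _ => (1:ℝ)) (N ω)) (Δ k) μ :=
      hindep.comp (measurable_const.indicator (measurableSet_singleton k))
        (measurable_pi_apply k)
    have hI : Integrable (fun ω => Set.indicator ({k} : Set ℕ) (fun _ => (1:ℝ)) (N ω)) μ := by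
      apply Integrable.mono' (integrable_const (1:ℝ))
      · exact ((measurable_const.indicator (measurableSet_singleton k)).comp hN).aestronglyMeasurable
      · filter_upwards with ω
        by_cases h : N ω ∈ ({k} : Set ℕ) <;> simp [Set.indicator_apply, h]
    have hmul := hind.integral_mul_eq_mul_integral hI.aestronglyMeasurable (hΔint k).aestronglyMeasurable
    have hrw : ((fun ω => Set.indicator ({k} : Set ℕ) (fun _ => (1:ℝ)) (N ω)) * Δ k)
        = Set.indicator {ω | N ω = k} (Δ k) := by
      funext ω
      by_cases h : N ω = k <;> simp [Set.indicator_apply, h]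
    rw [hrw] at hmul
    have hIi : ∫ ω, Set.indicator ({k} : Set ℕ) (fun _ => (1:ℝ)) (N ω) ∂μ
        = r * (1 - r) ^ k := by
      have : (fun ω => Set.indicator ({k} : Set ℕ) (fun _ => (1:ℝ)) (N ω))
          = Set.indicator {ω | N ω = k} (fun _ => (1:ℝ)) := by
        funext ω
        by_cases h : N ω = k <;> simp [Set.indicator_apply, h]
      rw [this, integral_indicator (hmeas k), setIntegral_const, smul_eq_mul, mul_one,
        measureReal_def, hgeo k, ENNReal.toReal_ofReal (hp k).le]
    rw [integral_indicator (hmeas k)] at hmul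
    rw [hmul, hIi]
    exact mul_div_cancel_left₀ _ (hp k).ne'
  rw [h1]
  rw [tsum_congr h2]
  exact hsum
end

section
/- Let N be geometric with P(N=k)=r(1-r)^k, independent of random variables (Δ_m) satisfying E[Δ_m²] ≤ c·2^{-(1+α)m} for constants c > 0, α > 0. If 1/2 < r < 1 - 2^{-(1+α)}, then E[(Δ_N/p(N))²] = ∑_{k=0}^∞ E[Δ_k²]/p(k) ≤ (c/r) ∑_{k=0}^∞ (2^{1+α}(1-r))^{-k} < ∞. -/
open MeasureTheory ProbabilityTheory

/-- Finite variance of the randomized multilevel estimator: second-moment identity and bound. -/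
theorem stmt_1 {Ω : Type*} [MeasurableSpace Ω] (μ : Measure Ω) [IsProbabilityMeasure μ]
    (α : ℝ) (hα : 0 < α)
    (r : ℝ) (hr : r ∈ Set.Ioo (1 / 2 : ℝ) (1 - 2 ^ (-(1 + α))))
    (N : Ω → ℕ) (hN : Measurable N)
    (hgeo : ∀ k : ℕ, μ {ω | N ω = k} = ENNReal.ofReal (r * (1 - r) ^ k))
    (Δ : ℕ → Ω → ℝ) (hΔmeas : ∀ m, Measurable (Δ m))
    (hΔsq : ∀ m, Integrable (fun ω => (Δ m ω) ^ 2) μ)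
    (c : ℝ) (hc : 0 < c)
    (hbound : ∀ m : ℕ, ∫ ω, (Δ m ω) ^ 2 ∂μ ≤ c * 2 ^ (-(1 + α) * m))
    (hindep : IndepFun N (fun ω => fun m => Δ m ω) μ) :
    Integrable (fun ω => (Δ (N ω) ω / (r * (1 - r) ^ (N ω))) ^ 2) μ ∧
    ∫ ω, (Δ (N ω) ω / (r * (1 - r) ^ (N ω))) ^ 2 ∂μ
      = ∑' k : ℕ, (∫ ω, (Δ k ω) ^ 2 ∂μ) / (r * (1 - r) ^ k) ∧
    ∑' k : ℕ, (∫ ω, (Δ k ω) ^ 2 ∂μ) / (r * (1 - r) ^ k)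
      ≤ (c / r) * ∑' k : ℕ, (((2 : ℝ) ^ (1 + α) * (1 - r)) ^ k)⁻¹ ∧
    Summable (fun k : ℕ => (((2 : ℝ) ^ (1 + α) * (1 - r)) ^ k)⁻¹) := by
  obtain ⟨hr1, hr2⟩ := hr
  have hr0 : (0 : ℝ) < r := lt_trans (by norm_num) hr1
  have h2pos : (0 : ℝ) < (2 : ℝ) ^ (-(1 + α)) := Real.rpow_pos_of_pos (by norm_num) _
  have h2pos' : (0 : ℝ) < (2 : ℝ) ^ (1 + α) := Real.rpow_pos_of_pos (by norm_num) _
  have hrlt1 : r < 1 := lt_of_lt_of_le hr2 (by linarith)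
  have h1r : (0 : ℝ) < 1 - r := by linarith
  have h2lt : (2 : ℝ) ^ (-(1 + α)) < 1 - r := by linarith
  -- notation
  set p : ℕ → ℝ := fun k => r * (1 - r) ^ k with hp
  have hppos : ∀ k, 0 < p k := fun k => mul_pos hr0 (pow_pos h1r k)
  set I : ℕ → ℝ := fun k => ∫ ω, (Δ k ω) ^ 2 ∂μ with hI
  have hInn : ∀ k, 0 ≤ I k := fun k => integral_nonneg fun ω => sq_nonneg _
  set q : ℝ := ((2 : ℝ) ^ (1 + α) * (1 - r))⁻¹ with hqdef
  have hqeq : q = (2 : ℝ) ^ (-(1 + α)) / (1 - r) := by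
    rw [hqdef, mul_inv, Real.rpow_neg (by norm_num)]
    ring
  have hq0 : 0 ≤ q := le_of_lt (by rw [hqeq]; positivity)
  have hq1 : q < 1 := by
    rw [hqeq, div_lt_one h1r]; exact h2lt
  have hqsum : Summable (fun k : ℕ => q ^ k) := summable_geometric_of_lt_one hq0 hq1
  have hsummand : ∀ k : ℕ, (((2 : ℝ) ^ (1 + α) * (1 - r)) ^ k)⁻¹ = q ^ k := by
    intro k; rw [hqdef, inv_pow]
  have hsum4 : Summable (fun k : ℕ => (((2 : ℝ) ^ (1 + α) * (1 - r)) ^ k)⁻¹) := by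
    simpa only [hsummand] using hqsum
  -- termwise bound
  have htermbound : ∀ k : ℕ, I k / p k ≤ (c / r) * q ^ k := by
    intro k
    have h2k : (2 : ℝ) ^ (-(1 + α) * (k : ℝ)) = ((2 : ℝ) ^ (-(1 + α))) ^ k := by
      rw [Real.rpow_mul (by norm_num), Real.rpow_natCast]
    have h1 : I k ≤ c * ((2 : ℝ) ^ (-(1 + α))) ^ k := by
      have := hbound k; rwa [h2k] at this
    calc I k / p k ≤ (c * ((2 : ℝ) ^ (-(1 + α))) ^ k) / p k := by
          gcongr
      _ = (c / r) * q ^ k := by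
          rw [hqeq, div_pow, hp]
          field_simp
  -- summability of the series of I k / p k
  have hSsum : Summable (fun k : ℕ => I k / p k) :=
    Summable.of_nonneg_of_le (fun k => div_nonneg (hInn k) (hppos k).le)
      htermbound (hqsum.mul_left (c / r))
  have hS_nonneg : 0 ≤ ∑' k, I k / p k :=
    tsum_nonneg fun k => div_nonneg (hInn k) (hppos k).le
  -- third claim
  have hthird : (∑' k : ℕ, I k / p k) ≤ (c / r) * ∑' k : ℕ, q ^ k := by
    rw [← tsum_mul_left]
    exact Summable.tsum_le_tsum htermbound hSsum (hqsum.mul_left (c / r))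
  -- measurability
  set g : Ω → ℝ := fun ω => (Δ (N ω) ω / p (N ω)) ^ 2 with hg
  have hDcomp : Measurable (fun ω => Δ (N ω) ω) := by
    have h1 : Measurable (fun x : Ω × ℕ => Δ x.2 x.1) :=
      measurable_from_prod_countable_left fun k => hΔmeas k
    exact h1.comp (measurable_id.prodMk hN)
  have hgmeas : Measurable g := by
    apply Measurable.pow_const
    exact hDcomp.div ((measurable_const.mul ((measurable_const.pow measurable_id).comp hN)))
  have hgnn : ∀ ω, 0 ≤ g ω := fun ω => sq_nonneg _
  -- the partition
  set s : ℕ → Set Ω := fun k => {ω | N ω = k} with hs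
  have hsm : ∀ k, MeasurableSet (s k) := fun k => hN (measurableSet_singleton k)
  have hsdisj : Pairwise (Function.onFun Disjoint s) := by
    intro i j hij
    simp only [Function.onFun, Set.disjoint_left]
    intro ω hi hj
    exact hij (hi.symm.trans hj)
  have hcover : (⋃ k, s k) = Set.univ := by
    ext ω; simp [hs]
  -- key per-level integral via independence
  have hkey : ∀ k : ℕ, ∫ ω in s k, (Δ k ω) ^ 2 ∂μ = p k * I k := by
    intro k
    set X : Ω → ℝ := (s k).indicator (1 : Ω → ℝ) with hX
    set Y : Ω → ℝ := fun ω => (Δ k ω) ^ 2 with hY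
    have hXcomp : X = (fun n : ℕ => if n = k then (1 : ℝ) else 0) ∘ N := by
      funext ω
      simp [hX, Set.indicator_apply, hs, Set.mem_setOf_eq]
    have hYcomp : Y = (fun v : ℕ → ℝ => (v k) ^ 2) ∘ (fun ω => fun m => Δ m ω) := rfl
    have hInd : IndepFun X Y μ := by
      rw [hXcomp, hYcomp]
      exact hindep.comp (measurable_from_top) ((measurable_pi_apply k).pow_const 2)
    have hXint : Integrable X μ := (integrable_const (1 : ℝ)).indicator (hsm k)
    have hYint : Integrable Y μ := hΔsq k
    have hmul : ∫ ω, X ω * Y ω ∂μ = (∫ ω, X ω ∂μ) * ∫ ω, Y ω ∂μ :=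
      hInd.integral_mul_eq_mul_integral hXint.aestronglyMeasurable hYint.aestronglyMeasurable
    have hXY : ∀ ω, X ω * Y ω = (s k).indicator Y ω := by
      intro ω
      by_cases h : ω ∈ s k <;> simp [hX, Set.indicator_apply, h]
    have hXval : ∫ ω, X ω ∂μ = p k := by
      rw [hX, integral_indicator_one (hsm k)]
      rw [show s k = {ω | N ω = k} from rfl, measureReal_def, hgeo k,
        ENNReal.toReal_ofReal (hppos k).le]
    calc ∫ ω in s k, (Δ k ω) ^ 2 ∂μ = ∫ ω, (s k).indicator Y ω ∂μ := by
          rw [integral_indicator (hsm k)]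
      _ = ∫ ω, X ω * Y ω ∂μ := by simp_rw [hXY]
      _ = p k * I k := by rw [hmul, hXval]
  -- per-level integral of g
  have hpiece : ∀ k : ℕ, ∫ ω in s k, (Δ k ω / p k) ^ 2 ∂μ = I k / p k := by
    intro k
    have : (fun ω => (Δ k ω / p k) ^ 2) = fun ω => (Δ k ω) ^ 2 * ((p k) ^ 2)⁻¹ := by
      funext ω; rw [div_pow]; ring
    rw [this, integral_mul_const, hkey k]
    field_simp
  have hpieceInt : ∀ k : ℕ, Integrable (fun ω => (Δ k ω / p k) ^ 2) μ := by
    intro k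
    have : (fun ω => (Δ k ω / p k) ^ 2) = fun ω => (Δ k ω) ^ 2 * ((p k) ^ 2)⁻¹ := by
      funext ω; rw [div_pow]; ring
    rw [this]
    exact (hΔsq k).mul_const _
  -- lintegral computation
  have hlint : ∫⁻ ω, ENNReal.ofReal (g ω) ∂μ = ENNReal.ofReal (∑' k, I k / p k) := by
    calc ∫⁻ ω, ENNReal.ofReal (g ω) ∂μ
        = ∫⁻ ω in ⋃ k, s k, ENNReal.ofReal (g ω) ∂μ := by
          rw [hcover, Measure.restrict_univ]
      _ = ∑' k, ∫⁻ ω in s k, ENNReal.ofReal (g ω) ∂μ := lintegral_iUnion hsm hsdisj _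
      _ = ∑' k, ∫⁻ ω in s k, ENNReal.ofReal ((Δ k ω / p k) ^ 2) ∂μ := by
          congr 1; funext k
          apply setLIntegral_congr_fun (hsm k)
          intro ω hω
          have : N ω = k := hω
          simp [hg, this]
      _ = ∑' k, ENNReal.ofReal (∫ ω in s k, (Δ k ω / p k) ^ 2 ∂μ) := by
          congr 1; funext k
          rw [ofReal_integral_eq_lintegral_ofReal ((hpieceInt k).restrict)
            (Filter.Eventually.of_forall fun ω => sq_nonneg _)]
      _ = ∑' k, ENNReal.ofReal (I k / p k) := by
          congr 1; funext k; rw [hpiece k]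
      _ = ENNReal.ofReal (∑' k, I k / p k) :=
          (ENNReal.ofReal_tsum_of_nonneg (fun k => div_nonneg (hInn k) (hppos k).le) hSsum).symm
  -- integrability of g
  have hgint : Integrable g μ := by
    refine ⟨hgmeas.aestronglyMeasurable, ?_⟩
    rw [HasFiniteIntegral]
    have : ∀ ω, ‖g ω‖ₑ = ENNReal.ofReal (g ω) := fun ω =>
      Real.enorm_eq_ofReal (hgnn ω)
    simp_rw [this, hlint]
    exact ENNReal.ofReal_lt_top
  -- integral of g
  have hgval : ∫ ω, g ω ∂μ = ∑' k, I k / p k := by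
    rw [integral_eq_lintegral_of_nonneg_ae (Filter.Eventually.of_forall hgnn)
      hgmeas.aestronglyMeasurable, hlint, ENNReal.toReal_ofReal hS_nonneg]
  refine ⟨hgint, hgval, ?_, hsum4⟩
  calc (∑' k : ℕ, I k / p k) ≤ (c / r) * ∑' k : ℕ, q ^ k := hthird
    _ = (c / r) * ∑' k : ℕ, (((2 : ℝ) ^ (1 + α) * (1 - r)) ^ k)⁻¹ := by
        simp_rw [hsummand]
end

section
/- For α > 0, the product W(r) = (∑_{k=0}^∞ 2^{-(1+α)k}/p(k)) · (∑_{k=0}^∞ 2^k p(k)), where p(k)=r(1-r)^k, over r ∈ (1/2, 1-2^{-(1+α)}), is minimized at r = 1 - 2^{-(1+α/2)}. -/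
/-- The work-normalized variance bound for a geometric randomization level `N` with
success probability `r`. -/
noncomputable def workNormalizedBound (α r : ℝ) : ℝ :=
  (∑' k : ℕ, (2 : ℝ) ^ (-(1 + α) * k) / (r * (1 - r) ^ k)) *
    (∑' k : ℕ, (2 : ℝ) ^ (k : ℝ) * (r * (1 - r) ^ k))

lemma wnb_eq (α r : ℝ) (hr : r ∈ Set.Ioo (1 / 2 : ℝ) (1 - 2 ^ (-(1 + α)))) :
    workNormalizedBound α r
      = (1 - r) / (((1 - r) - 2 ^ (-(1 + α))) * (2 * r - 1)) := by
  obtain ⟨hr1, hr2⟩ := hr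
  set c : ℝ := 2 ^ (-(1 + α)) with hc
  have hc0 : 0 < c := Real.rpow_pos_of_pos (by norm_num) _
  have hr0 : 0 < r := by linarith
  have hs0 : 0 < 1 - r := by linarith [hc0]
  have hcs : c < 1 - r := by linarith
  have hq1 : 0 ≤ c / (1 - r) := by positivity
  have hq2 : c / (1 - r) < 1 := (div_lt_one hs0).2 hcs
  have hp1 : 0 ≤ 2 * (1 - r) := by linarith
  have hp2 : 2 * (1 - r) < 1 := by linarith
  have e1 : (∑' k : ℕ, (2 : ℝ) ^ (-(1 + α) * k) / (r * (1 - r) ^ k))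
      = (1 / r) * (1 - c / (1 - r))⁻¹ := by
    have : ∀ k : ℕ, (2 : ℝ) ^ (-(1 + α) * k) / (r * (1 - r) ^ k)
        = (1 / r) * (c / (1 - r)) ^ k := by
      intro k
      have h2 : (2 : ℝ) ^ (-(1 + α) * k) = c ^ k := by
        rw [hc, ← Real.rpow_natCast (2 ^ (-(1 + α)) : ℝ) k,
          ← Real.rpow_mul (by norm_num : (0:ℝ) ≤ 2)]
      rw [h2, div_pow]
      field_simp
    rw [tsum_congr this, tsum_mul_left, tsum_geometric_of_lt_one hq1 hq2]
  have e2 : (∑' k : ℕ, (2 : ℝ) ^ (k : ℝ) * (r * (1 - r) ^ k))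
      = r * (1 - 2 * (1 - r))⁻¹ := by
    have : ∀ k : ℕ, (2 : ℝ) ^ (k : ℝ) * (r * (1 - r) ^ k)
        = r * (2 * (1 - r)) ^ k := by
      intro k
      rw [Real.rpow_natCast, mul_pow]
      ring
    rw [tsum_congr this, tsum_mul_left, tsum_geometric_of_lt_one hp1 hp2]
  rw [workNormalizedBound, e1, e2]
  have h1 : 1 - c / (1 - r) ≠ 0 := by
    have : 0 < 1 - c / (1 - r) := by linarith
    linarith
  have h2 : 1 - 2 * (1 - r) ≠ 0 := by nlinarith
  have h3 : (1 - r) - c ≠ 0 := by linarith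
  have h4 : 2 * r - 1 ≠ 0 := by nlinarith
  field_simp
  ring

/-- The product of the variance-bound series and the expected-cost series is minimized over
`r ∈ (1/2, 1 - 2^{-(1+α)})` at `r = 1 - 2^{-(1+α/2)}`. -/
theorem stmt_3 (α : ℝ) (hα : 0 < α) :
    (1 - (2 : ℝ) ^ (-(1 + α / 2)) ∈ Set.Ioo (1 / 2 : ℝ) (1 - 2 ^ (-(1 + α)))) ∧
    ∀ r ∈ Set.Ioo (1 / 2 : ℝ) (1 - 2 ^ (-(1 + α))),
      workNormalizedBound α (1 - (2 : ℝ) ^ (-(1 + α / 2))) ≤ workNormalizedBound α r := by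
  set c : ℝ := 2 ^ (-(1 + α)) with hc
  set t : ℝ := 2 ^ (-(1 + α / 2)) with ht
  have hc0 : 0 < c := Real.rpow_pos_of_pos (by norm_num) _
  have ht0 : 0 < t := Real.rpow_pos_of_pos (by norm_num) _
  have hlt : ∀ x y : ℝ, x < y → (2:ℝ) ^ x < 2 ^ y := fun x y h =>
    Real.rpow_lt_rpow_left_iff (by norm_num : (1:ℝ) < 2) |>.2 h
  have hct : c < t := hlt _ _ (by linarith)
  have ht2 : t < 1 / 2 := by
    have := hlt (-(1 + α / 2)) (-1) (by linarith)
    rwa [show ((2:ℝ) ^ (-1:ℝ)) = 1/2 by norm_num [Real.rpow_neg_one]] at this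
  have htsq : t ^ 2 = c / 2 := by
    rw [ht, hc, ← Real.rpow_natCast ((2:ℝ) ^ (-(1 + α/2))) 2,
      ← Real.rpow_mul (by norm_num : (0:ℝ) ≤ 2)]
    rw [show (2:ℝ) ^ (-(1+α)) / 2 = 2 ^ (-(1+α)) / 2 ^ (1:ℝ) by norm_num,
      ← Real.rpow_sub (by norm_num : (0:ℝ) < 2)]
    norm_num
    congr 1
    ring
  have hmem : 1 - t ∈ Set.Ioo (1 / 2 : ℝ) (1 - c) :=
    ⟨by linarith, by linarith⟩
  refine ⟨hmem, fun r hr => ?_⟩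
  rw [wnb_eq α r hr, wnb_eq α (1 - t) hmem]
  obtain ⟨hr1, hr2⟩ := hr
  set s : ℝ := 1 - r with hs
  have hs1 : c < s := by rw [hs]; linarith
  have hs2 : s < 1 / 2 := by rw [hs]; linarith
  have hs0 : 0 < s := lt_trans hc0 hs1
  have hden1 : 0 < (s - c) * (2 * r - 1) := by
    apply mul_pos <;> nlinarith
  have hden2 : 0 < ((1 - (1 - t)) - c) * (2 * (1 - t) - 1) := by
    apply mul_pos <;> nlinarith
  have key : (1 - (1 - t)) / (((1 - (1 - t)) - c) * (2 * (1 - t) - 1))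
      ≤ s / ((s - c) * (2 * r - 1)) := by
    rw [div_le_div_iff₀ hden2 hden1]
    have h2r : 2 * r - 1 = 1 - 2 * s := by rw [hs]; ring
    rw [h2r]
    nlinarith [mul_nonneg ht0.le (sq_nonneg (s - t)), sq_nonneg (s - t), htsq]
  calc (1 - (1 - t)) / (((1 - (1 - t)) - c) * (2 * (1 - t) - 1))
      ≤ s / ((s - c) * (2 * r - 1)) := key
    _ = (1 - r) / (((1 - r) - c) * (2 * r - 1)) := by rw [hs]
end

section
/- Suppose X_1,...,X_n are iid ℝ^d-valued with mean ν and E[‖X_1‖²] < ∞. Fix δ > 0 and δ' ∈ (0,1), and let N_n = #{1 ≤ i ≤ n : ‖X_i − ν‖ ≥ n^{1-δ'}}. Then conditionally on N_n = 0, the increments are bounded by n^{1-δ'} and for every γ > 0, P(‖S_n/n − ν‖ > δ/2, N_n = 0) = o(n^{-γ}) as n → ∞. -/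
open MeasureTheory ProbabilityTheory Filter

lemma aux_exp_le {x : ℝ} (h : |x| ≤ 1) : Real.exp x ≤ 1 + x + x ^ 2 := by
  have := Real.exp_bound h (n := 2) (by norm_num)
  have h2 : Real.exp x - (1 + x) ≤ |x| ^ 2 * (3 / (2 * 2)) := by
    have := abs_le.mp this
    simpa [Finset.sum_range_succ] using this.2
  nlinarith [sq_abs x, sq_nonneg x]

lemma aux_mgf_le {Ω : Type*} [MeasurableSpace Ω] (μ : Measure Ω) [IsProbabilityMeasure μ]
    (V : Ω → ℝ) (hV : Measurable V) (lam M : ℝ) (hb : ∀ ω, |V ω| ≤ M)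
    (hlam : 0 ≤ lam) (hlM : lam * M ≤ 1) :
    mgf V μ lam ≤ Real.exp (lam * ∫ ω, V ω ∂μ + lam ^ 2 * ∫ ω, (V ω) ^ 2 ∂μ) := by
  have hpt : ∀ ω, Real.exp (lam * V ω) ≤ 1 + lam * V ω + lam ^ 2 * (V ω) ^ 2 := by
    intro ω
    have habs : |lam * V ω| ≤ 1 := by
      rw [abs_mul, abs_of_nonneg hlam]
      calc lam * |V ω| ≤ lam * M := by gcongr; exact hb ω
        _ ≤ 1 := hlM
    calc Real.exp (lam * V ω) ≤ 1 + lam * V ω + (lam * V ω) ^ 2 := aux_exp_le habs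
      _ = 1 + lam * V ω + lam ^ 2 * (V ω) ^ 2 := by ring
  have hVint : Integrable V μ :=
    (integrable_const M).mono' hV.aestronglyMeasurable
      (Filter.Eventually.of_forall fun ω => by simpa [Real.norm_eq_abs] using hb ω)
  have hV2int : Integrable (fun ω => (V ω) ^ 2) μ :=
    (integrable_const (M ^ 2)).mono' (hV.pow_const 2).aestronglyMeasurable
      (Filter.Eventually.of_forall fun ω => by
        have := hb ω
        have : (V ω) ^ 2 ≤ M ^ 2 := sq_le_sq' (by linarith [(abs_le.mp this).1]) (abs_le.mp this).2
        simpa [Real.norm_eq_abs, abs_of_nonneg (sq_nonneg (V ω))] using this)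
  have hexpint : Integrable (fun ω => Real.exp (lam * V ω)) μ :=
    (integrable_const (Real.exp 1)).mono' ((hV.const_mul lam).exp).aestronglyMeasurable
      (Filter.Eventually.of_forall fun ω => by
        have habs : lam * V ω ≤ 1 := by
          calc lam * V ω ≤ lam * |V ω| := by
                have := le_abs_self (V ω); nlinarith
            _ ≤ lam * M := by gcongr; exact hb ω
            _ ≤ 1 := hlM
        simpa [Real.norm_eq_abs, abs_of_nonneg (Real.exp_nonneg _)] using Real.exp_le_exp.mpr habs)
  calc mgf V μ lam = ∫ ω, Real.exp (lam * V ω) ∂μ := rfl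
    _ ≤ ∫ ω, (1 + lam * V ω + lam ^ 2 * (V ω) ^ 2) ∂μ := by
        refine integral_mono hexpint ?_ hpt
        exact ((integrable_const 1).add (hVint.const_mul lam)).add (hV2int.const_mul (lam ^ 2))
    _ = 1 + (lam * ∫ ω, V ω ∂μ + lam ^ 2 * ∫ ω, (V ω) ^ 2 ∂μ) := by
        have e1 : ∫ ω, (1 + lam * V ω + lam ^ 2 * (V ω) ^ 2) ∂μ
            = (∫ ω, (1 + lam * V ω) ∂μ) + ∫ ω, lam ^ 2 * (V ω) ^ 2 ∂μ :=
          integral_add ((integrable_const 1).add (hVint.const_mul lam)) (hV2int.const_mul (lam ^ 2))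
        have e2 : ∫ ω, (1 + lam * V ω) ∂μ = (∫ (_ : Ω), (1:ℝ) ∂μ) + ∫ ω, lam * V ω ∂μ :=
          integral_add (integrable_const 1) (hVint.const_mul lam)
        rw [e1, e2, integral_const, integral_const_mul, integral_const_mul]
        simp [measure_univ]; ring
    _ ≤ Real.exp (lam * ∫ ω, V ω ∂μ + lam ^ 2 * ∫ ω, (V ω) ^ 2 ∂μ) := by
        have := Real.add_one_le_exp (lam * ∫ ω, V ω ∂μ + lam ^ 2 * ∫ ω, (V ω) ^ 2 ∂μ)
        linarith

lemma aux_chernoff {Ω : Type*} [MeasurableSpace Ω] (μ : Measure Ω) [IsProbabilityMeasure μ]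
    (V : ℕ → Ω → ℝ) (hVmeas : ∀ i, Measurable (V i))
    (hVindep : iIndepFun V μ)
    (hVident : ∀ i, IdentDistrib (V i) (V 1) μ μ)
    (M lam a : ℝ) (hb : ∀ i ω, |V i ω| ≤ M) (hlam : 0 ≤ lam) (hlM : lam * M ≤ 1) (n : ℕ) :
    (μ {ω | a ≤ ∑ i ∈ Finset.range n, V (i + 1) ω}).toReal ≤
      Real.exp (-lam * a + n * (lam * ∫ ω, V 1 ω ∂μ + lam ^ 2 * ∫ ω, (V 1 ω) ^ 2 ∂μ)) := by
  set s : Finset ℕ := Finset.Ico 1 (n + 1) with hs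
  have hsum : ∀ ω, ∑ i ∈ Finset.range n, V (i + 1) ω = (∑ i ∈ s, V i) ω := by
    intro ω
    rw [Finset.sum_apply, hs, Finset.sum_Ico_eq_sum_range]
    simp [add_comm]
  have hcard : s.card = n := by simp [hs]
  have hint : ∀ i ∈ s, Integrable (fun ω => Real.exp (lam * V i ω)) μ := by
    intro i _
    refine (integrable_const (Real.exp 1)).mono' ((hVmeas i).const_mul lam).exp.aestronglyMeasurable
      (Filter.Eventually.of_forall fun ω => ?_)
    have h1 : lam * V i ω ≤ 1 := by
      calc lam * V i ω ≤ lam * |V i ω| := by nlinarith [le_abs_self (V i ω)]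
        _ ≤ lam * M := by gcongr; exact hb i ω
        _ ≤ 1 := hlM
    simpa [Real.norm_eq_abs, abs_of_nonneg (Real.exp_nonneg _)] using Real.exp_le_exp.mpr h1
  have hintsum : Integrable (fun ω => Real.exp (lam * (∑ i ∈ s, V i) ω)) μ :=
    hVindep.integrable_exp_mul_sum hVmeas hint
  have hchern := measure_ge_le_exp_mul_mgf (μ := μ) (X := ∑ i ∈ s, V i) a hlam hintsum
  have hmgf : mgf (∑ i ∈ s, V i) μ lam = (mgf (V 1) μ lam) ^ n := by
    rw [hVindep.mgf_sum hVmeas s]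
    have : ∀ i ∈ s, mgf (V i) μ lam = mgf (V 1) μ lam := by
      intro i _
      exact ((hVident i).comp (Real.measurable_exp.comp (measurable_const_mul lam))).integral_eq
    rw [Finset.prod_congr rfl this, Finset.prod_const, hcard]
  have hone : mgf (V 1) μ lam ≤ Real.exp (lam * ∫ ω, V 1 ω ∂μ + lam ^ 2 * ∫ ω, (V 1 ω) ^ 2 ∂μ) :=
    aux_mgf_le μ (V 1) (hVmeas 1) lam M (hb 1) hlam hlM
  have hset : {ω | a ≤ ∑ i ∈ Finset.range n, V (i + 1) ω} = {ω | a ≤ (∑ i ∈ s, V i) ω} := by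
    ext ω; simp [hsum ω]
  rw [hset]
  calc (μ {ω | a ≤ (∑ i ∈ s, V i) ω}).toReal
      ≤ Real.exp (-lam * a) * mgf (∑ i ∈ s, V i) μ lam := hchern
    _ ≤ Real.exp (-lam * a) *
        (Real.exp (lam * ∫ ω, V 1 ω ∂μ + lam ^ 2 * ∫ ω, (V 1 ω) ^ 2 ∂μ)) ^ n := by
        rw [hmgf]
        have h0 : (0:ℝ) ≤ mgf (V 1) μ lam := mgf_nonneg
        gcongr
    _ = Real.exp (-lam * a + n * (lam * ∫ ω, V 1 ω ∂μ + lam ^ 2 * ∫ ω, (V 1 ω) ^ 2 ∂μ)) := by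
        rw [← Real.exp_nat_mul, ← Real.exp_add]

set_option maxHeartbeats 2000000 in
/-- Superpolynomial decay of the probability that the empirical mean deviates while all
increments are small (`N_n = 0`). -/
theorem stmt_8 {Ω : Type*} [MeasurableSpace Ω] (μ : Measure Ω) [IsProbabilityMeasure μ]
    (d : ℕ) (X : ℕ → Ω → EuclideanSpace ℝ (Fin d))
    (hmeas : ∀ i, Measurable (X i))
    (hindep : iIndepFun X μ)
    (hident : ∀ i : ℕ, IdentDistrib (X i) (X 1) μ μ)
    (ν : EuclideanSpace ℝ (Fin d)) (hν : ∫ ω, X 1 ω ∂μ = ν)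
    (hmom : Integrable (fun ω => ‖X 1 ω‖ ^ 2) μ)
    (δ : ℝ) (hδ : 0 < δ) (δ' : ℝ) (hδ' : δ' ∈ Set.Ioo (0 : ℝ) 1)
    (γ : ℝ) (hγ : 0 < γ) :
    Tendsto (fun n : ℕ =>
        (μ {ω | δ / 2 < ‖(n : ℝ)⁻¹ • (∑ i ∈ Finset.range n, X (i + 1) ω) - ν‖ ∧
            ∀ i ∈ Finset.range n, ‖X (i + 1) ω - ν‖ < (n : ℝ) ^ ((1 : ℝ) - δ')}).toReal
          * (n : ℝ) ^ γ)
      atTop (nhds 0) := by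
  classical
  obtain ⟨hδ'0, hδ'1⟩ := hδ'
  rcases Nat.eq_zero_or_pos d with hd0 | hd
  · subst hd0
    have hempty : ∀ n : ℕ, {ω | δ / 2 < ‖(n : ℝ)⁻¹ • (∑ i ∈ Finset.range n, X (i + 1) ω) - ν‖ ∧
        ∀ i ∈ Finset.range n, ‖X (i + 1) ω - ν‖ < (n : ℝ) ^ ((1 : ℝ) - δ')} = ∅ := by
      intro n
      ext ω
      simp only [Set.mem_setOf_eq, Set.mem_empty_iff_false, iff_false, not_and]
      intro h
      exfalso
      have h0 : ‖(n : ℝ)⁻¹ • (∑ i ∈ Finset.range n, X (i + 1) ω) - ν‖ = 0 := by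
        rw [EuclideanSpace.norm_eq]
        simp
      rw [h0] at h
      linarith
    refine Tendsto.congr (f₁ := fun _ => 0) ?_ tendsto_const_nhds
    intro n
    rw [hempty n]
    simp
  -- main case : d ≥ 1
  -- basic integrability facts
  have hX1mem2 : MemLp (X 1) 2 μ :=
    (memLp_two_iff_integrable_sq_norm (hmeas 1).aestronglyMeasurable).mpr hmom
  have hX1int : Integrable (X 1) μ := hX1mem2.integrable one_le_two
  have hXint : Integrable (fun ω => X 1 ω - ν) μ := hX1int.sub (integrable_const ν)
  have hXmean : ∫ ω, (X 1 ω - ν) ∂μ = 0 := by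
    rw [integral_sub hX1int (integrable_const ν), hν, integral_const]
    simp
  have hsqint : Integrable (fun ω => ‖X 1 ω - ν‖ ^ 2) μ := by
    have hm : MemLp (fun ω => X 1 ω - ν) 2 μ := hX1mem2.sub (memLp_const ν)
    exact (memLp_two_iff_integrable_sq_norm hm.aestronglyMeasurable).mp hm
  set Cσ := ∫ ω, ‖X 1 ω - ν‖ ^ 2 ∂μ with hCσdef
  have hCσ0 : 0 ≤ Cσ := integral_nonneg fun ω => sq_nonneg _
  have hsd : 0 < Real.sqrt d := Real.sqrt_pos.mpr (by exact_mod_cast hd)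
  set t : ℝ := δ / (4 * Real.sqrt d) with htdef
  have htpos : 0 < t := div_pos hδ (by positivity)
  set M : ℕ → ℝ := fun n => (n : ℝ) ^ ((1 : ℝ) - δ') with hMdef
  set lam : ℕ → ℝ := fun n => (n : ℝ) ^ (δ' - 1) with hlamdef
  have hlamnn : ∀ n, 0 ≤ lam n := fun n => Real.rpow_nonneg (Nat.cast_nonneg n) _
  have hMnn : ∀ n, 0 ≤ M n := fun n => Real.rpow_nonneg (Nat.cast_nonneg n) _
  have hlamM : ∀ n : ℕ, 1 ≤ n → lam n * M n = 1 := by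
    intro n hn
    have hn0 : (0 : ℝ) < n := by exact_mod_cast hn
    rw [hlamdef, hMdef, ← Real.rpow_add hn0]
    norm_num
  have hlampos : ∀ n : ℕ, 1 ≤ n → 0 < lam n := by
    intro n hn
    exact Real.rpow_pos_of_pos (by exact_mod_cast hn) _
  set L : Fin d → EuclideanSpace ℝ (Fin d) →L[ℝ] ℝ := fun j => EuclideanSpace.proj j with hLdef
  have hcoord : ∀ (y : EuclideanSpace ℝ (Fin d)) (j : Fin d), |L j y| ≤ ‖y‖ := by
    intro y j
    rw [EuclideanSpace.norm_eq]
    rw [show L j y = y j from rfl]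
    refine (Real.le_sqrt (abs_nonneg _) (Finset.sum_nonneg fun i _ => sq_nonneg _)).mpr ?_
    rw [sq_abs]
    have : ‖y j‖ ^ 2 ≤ ∑ i, ‖y i‖ ^ 2 :=
      Finset.single_le_sum (f := fun i => ‖y i‖ ^ 2) (fun i _ => sq_nonneg _) (Finset.mem_univ j)
    simpa [Real.norm_eq_abs, sq_abs] using this
  -- truncated coordinate functions
  set g : ℕ → Fin d → ℝ → EuclideanSpace ℝ (Fin d) → ℝ :=
    fun n j c x => if ‖x - ν‖ < M n then c * L j (x - ν) else 0 with hgdef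
  have hgmeas : ∀ n j c, Measurable (g n j c) := by
    intro n j c
    refine Measurable.ite (measurableSet_lt ?_ measurable_const) ?_ measurable_const
    · exact (continuous_id.sub continuous_const).norm.measurable
    · exact (((L j).continuous.comp (continuous_id.sub continuous_const)).measurable).const_mul c
  have hgnorm : ∀ n j (c : ℝ), |c| = 1 → ∀ x, |g n j c x| ≤ ‖x - ν‖ := by
    intro n j c hc x
    rw [hgdef]
    by_cases h : ‖x - ν‖ < M n
    · simp only [h, if_true, abs_mul, hc, one_mul]
      exact hcoord _ j
    · simp [h, norm_nonneg]
  have hgM : ∀ n j (c : ℝ), |c| = 1 → ∀ x, |g n j c x| ≤ M n := by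
    intro n j c hc x
    rw [hgdef]
    by_cases h : ‖x - ν‖ < M n
    · simp only [h, if_true, abs_mul, hc, one_mul]
      exact (hcoord _ j).trans h.le
    · simpa [h] using hMnn n
  -- the truncated variables
  set V : ℕ → Fin d → ℝ → ℕ → Ω → ℝ := fun n j c i ω => g n j c (X i ω) with hVdef
  have hVmeas : ∀ n j c i, Measurable (V n j c i) := fun n j c i => (hgmeas n j c).comp (hmeas i)
  have hVindep : ∀ n j c, iIndepFun (V n j c) μ :=
    fun n j c => hindep.comp (fun _ => g n j c) (fun _ => hgmeas n j c)
  have hVident : ∀ n j c i, IdentDistrib (V n j c i) (V n j c 1) μ μ :=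
    fun n j c i => (hident i).comp (hgmeas n j c)
  have hVbd : ∀ n j (c : ℝ), |c| = 1 → ∀ i ω, |V n j c i ω| ≤ M n :=
    fun n j c hc i ω => hgM n j c hc (X i ω)
  have hVint : ∀ n j (c : ℝ), |c| = 1 → Integrable (V n j c 1) μ := by
    intro n j c hc
    exact (integrable_const (M n)).mono' (hVmeas n j c 1).aestronglyMeasurable
      (Filter.Eventually.of_forall fun ω => by
        simpa [Real.norm_eq_abs] using hVbd n j c hc 1 ω)
  have hvar : ∀ n j (c : ℝ), |c| = 1 → ∫ ω, (V n j c 1 ω) ^ 2 ∂μ ≤ Cσ := by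
    intro n j c hc
    refine integral_mono ?_ hsqint fun ω => ?_
    · exact (integrable_const (M n ^ 2)).mono' ((hVmeas n j c 1).pow_const 2).aestronglyMeasurable
        (Filter.Eventually.of_forall fun ω => by
          have h1 := hVbd n j c hc 1 ω
          have h2 : (V n j c 1 ω) ^ 2 ≤ M n ^ 2 :=
            sq_le_sq' (by linarith [(abs_le.mp h1).1]) (abs_le.mp h1).2
          simpa [Real.norm_eq_abs, abs_of_nonneg (sq_nonneg (V n j c 1 ω))] using h2)
    · have h1 : |V n j c 1 ω| ≤ ‖X 1 ω - ν‖ := hgnorm n j c hc (X 1 ω)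
      nlinarith [abs_nonneg (V n j c 1 ω), sq_abs (V n j c 1 ω)]
  have hmean : ∀ n : ℕ, 1 ≤ n → ∀ j (c : ℝ), |c| = 1 →
      |∫ ω, V n j c 1 ω ∂μ| ≤ Cσ * lam n := by
    intro n hn j c hc
    set φ : Ω → ℝ := fun ω => c * L j (X 1 ω - ν) with hφdef
    have hφint : Integrable φ μ := ((L j).integrable_comp hXint).const_mul c
    have hφmean : ∫ ω, φ ω ∂μ = 0 := by
      rw [hφdef]
      rw [integral_const_mul, (L j).integral_comp_comm hXint, hXmean]
      simp
    have hdiff : ∀ ω, |V n j c 1 ω - φ ω| ≤ ‖X 1 ω - ν‖ ^ 2 * lam n := by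
      intro ω
      by_cases h : ‖X 1 ω - ν‖ < M n
      · have he : V n j c 1 ω = φ ω := by rw [hVdef, hgdef]; simp [h, hφdef]
        rw [he, sub_self, abs_zero]
        positivity
      · push_neg at h
        have h2 : V n j c 1 ω = 0 := by rw [hVdef, hgdef]; simp [not_lt.mpr h]
        rw [h2, zero_sub, abs_neg]
        have h3 : |φ ω| ≤ ‖X 1 ω - ν‖ := by
          rw [hφdef, abs_mul, hc, one_mul]; exact hcoord _ j
        have hlp := hlampos n hn
        have hlM1 := hlamM n hn
        calc |φ ω| ≤ ‖X 1 ω - ν‖ := h3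
          _ = ‖X 1 ω - ν‖ * (lam n * M n) := by rw [hlM1, mul_one]
          _ ≤ ‖X 1 ω - ν‖ * (lam n * ‖X 1 ω - ν‖) := by
              have ha : (0:ℝ) ≤ ‖X 1 ω - ν‖ := norm_nonneg _
              gcongr
          _ = ‖X 1 ω - ν‖ ^ 2 * lam n := by ring
    calc |∫ ω, V n j c 1 ω ∂μ| = |∫ ω, (V n j c 1 ω - φ ω) ∂μ| := by
          rw [integral_sub (hVint n j c hc) hφint, hφmean, sub_zero]
      _ ≤ ∫ ω, |V n j c 1 ω - φ ω| ∂μ := by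
          simpa [Real.norm_eq_abs] using
            norm_integral_le_integral_norm (μ := μ) (fun ω => V n j c 1 ω - φ ω)
      _ ≤ ∫ ω, ‖X 1 ω - ν‖ ^ 2 * lam n ∂μ :=
          integral_mono ((hVint n j c hc).sub hφint).abs (hsqint.mul_const _) hdiff
      _ = Cσ * lam n := by rw [integral_mul_const]
  -- Chernoff bound for each tail event
  have hchern : ∀ n : ℕ, 1 ≤ n → 2 * Cσ * lam n ≤ t / 2 → ∀ j (c : ℝ), |c| = 1 →
      (μ {ω | (n : ℝ) * t ≤ ∑ i ∈ Finset.range n, V n j c (i + 1) ω}).toReal ≤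
        Real.exp (-(t / 2) * (n : ℝ) ^ δ') := by
    intro n hn hsmall j c hc
    have h1 := aux_chernoff μ (V n j c) (hVmeas n j c) (hVindep n j c) (hVident n j c)
      (M n) (lam n) ((n : ℝ) * t) (hVbd n j c hc) (hlamnn n) (le_of_eq (hlamM n hn)) n
    refine h1.trans (Real.exp_le_exp.mpr ?_)
    have hb := hmean n hn j c hc
    have hv := hvar n j c hc
    have hv0 : (0:ℝ) ≤ ∫ ω, (V n j c 1 ω) ^ 2 ∂μ := integral_nonneg fun ω => sq_nonneg _
    have hl0 := (hlampos n hn).le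
    have hn0 : (0:ℝ) ≤ n := Nat.cast_nonneg n
    have hnlam : (n : ℝ) * lam n = (n : ℝ) ^ δ' := by
      have hn0' : (0:ℝ) < n := by exact_mod_cast hn
      rw [hlamdef]
      rw [show (n:ℝ) * (n:ℝ) ^ (δ' - 1) = (n:ℝ) ^ (1:ℝ) * (n:ℝ) ^ (δ'-1) by rw [Real.rpow_one]]
      rw [← Real.rpow_add hn0']
      norm_num
    have habs := abs_le.mp hb
    have key : lam n * (∫ ω, V n j c 1 ω ∂μ) + lam n ^ 2 * (∫ ω, (V n j c 1 ω) ^ 2 ∂μ)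
        ≤ lam n * (t / 2) := by
      nlinarith [mul_le_mul_of_nonneg_left habs.2 hl0,
        mul_le_mul_of_nonneg_left hv (mul_nonneg hl0 hl0),
        mul_le_mul_of_nonneg_left hsmall hl0]
    calc -lam n * ((n:ℝ) * t) +
          n * (lam n * (∫ ω, V n j c 1 ω ∂μ) + lam n ^ 2 * (∫ ω, (V n j c 1 ω) ^ 2 ∂μ))
        ≤ -lam n * ((n:ℝ) * t) + n * (lam n * (t/2)) := by
          nlinarith [mul_le_mul_of_nonneg_left key hn0]
      _ = -(t/2) * ((n:ℝ) * lam n) := by ring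
      _ = -(t/2) * (n:ℝ) ^ δ' := by rw [hnlam]
  -- inclusion of the deviation event in the union of tail events
  have hincl : ∀ n : ℕ, 1 ≤ n →
      {ω | δ / 2 < ‖(n : ℝ)⁻¹ • (∑ i ∈ Finset.range n, X (i + 1) ω) - ν‖ ∧
          ∀ i ∈ Finset.range n, ‖X (i + 1) ω - ν‖ < (n : ℝ) ^ ((1 : ℝ) - δ')} ⊆
        ⋃ j : Fin d, ({ω | (n : ℝ) * t ≤ ∑ i ∈ Finset.range n, V n j 1 (i + 1) ω} ∪
          {ω | (n : ℝ) * t ≤ ∑ i ∈ Finset.range n, V n j (-1) (i + 1) ω}) := by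
    intro n hn ω hω
    obtain ⟨h1, h2⟩ := hω
    set S := ∑ i ∈ Finset.range n, X (i + 1) ω with hSdef
    set w : EuclideanSpace ℝ (Fin d) := (n : ℝ)⁻¹ • S - ν with hwdef
    have hncast : (1:ℝ) ≤ (n:ℝ) := by exact_mod_cast hn
    have hnne : ((n:ℝ)) ≠ 0 := by linarith
    have hex : ∃ j : Fin d, 2 * t < |L j w| := by
      by_contra hcon
      push_neg at hcon
      have hnorm : ‖w‖ ≤ δ / 2 := by
        rw [EuclideanSpace.norm_eq]
        have hsum : ∑ i, ‖w i‖ ^ 2 ≤ (d:ℝ) * (2*t)^2 := by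
          calc ∑ i, ‖w i‖ ^ 2 ≤ ∑ _i : Fin d, (2*t)^2 := by
                refine Finset.sum_le_sum fun i _ => ?_
                have hci : |L i w| ≤ 2*t := hcon i
                have hwi : ‖w i‖ ≤ 2*t := by
                  rw [show (w i : ℝ) = L i w from rfl] at *
                  simpa [Real.norm_eq_abs] using hci
                nlinarith [norm_nonneg (w i)]
            _ = (d:ℝ) * (2*t)^2 := by
                rw [Finset.sum_const, Finset.card_univ, Fintype.card_fin, nsmul_eq_mul]
        calc Real.sqrt (∑ i, ‖w i‖ ^ 2) ≤ Real.sqrt ((d:ℝ) * (2*t)^2) := Real.sqrt_le_sqrt hsum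
          _ = Real.sqrt d * (2*t) := by
              rw [Real.sqrt_mul (Nat.cast_nonneg d), Real.sqrt_sq (by positivity)]
          _ = δ / 2 := by rw [htdef]; field_simp; ring
      linarith
    obtain ⟨j, hj⟩ := hex
    have hsumeq : ∀ (c : ℝ), ∑ i ∈ Finset.range n, V n j c (i + 1) ω
        = c * ((n:ℝ) * L j w) := by
      intro c
      have heach : ∀ i ∈ Finset.range n, V n j c (i + 1) ω = c * L j (X (i+1) ω - ν) := by
        intro i hi
        rw [hVdef, hgdef]
        simp only []
        rw [if_pos]
        rw [hMdef]
        exact h2 i hi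
      rw [Finset.sum_congr rfl heach, ← Finset.mul_sum]
      congr 1
      have hsplit : ∑ i ∈ Finset.range n, (X (i+1) ω - ν) = S - n • ν := by
        rw [Finset.sum_sub_distrib, Finset.sum_const, Finset.card_range, hSdef]
      rw [← map_sum (L j) _ (Finset.range n), hsplit, map_sub, map_nsmul, nsmul_eq_mul]
      have hw : L j w = (n:ℝ)⁻¹ * L j S - L j ν := by
        rw [hwdef, map_sub, _root_.map_smul, smul_eq_mul]
      rw [hw]
      field_simp
    rcases le_or_gt (L j w) 0 with hsign | hsign
    · refine Set.mem_iUnion.mpr ⟨j, Or.inr ?_⟩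
      rw [Set.mem_setOf_eq, hsumeq (-1)]
      have habs : |L j w| = -(L j w) := abs_of_nonpos hsign
      nlinarith [hj, htpos]
    · refine Set.mem_iUnion.mpr ⟨j, Or.inl ?_⟩
      rw [Set.mem_setOf_eq, hsumeq 1]
      have habs : |L j w| = L j w := abs_of_pos hsign
      nlinarith [hj, htpos]
  -- eventual bound for the measure of the event
  have hlamlim : Tendsto lam atTop (nhds 0) := by
    rw [hlamdef]
    have h1 : Tendsto (fun x : ℝ => x ^ (δ' - 1)) atTop (nhds 0) := by
      have := tendsto_rpow_neg_atTop (y := 1 - δ') (by linarith)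
      simpa [neg_sub] using this
    exact h1.comp tendsto_natCast_atTop_atTop
  have hsmallev : ∀ᶠ n : ℕ in atTop, 2 * Cσ * lam n ≤ t / 2 := by
    have hcont : Tendsto (fun n => 2 * Cσ * lam n) atTop (nhds 0) := by
      simpa using hlamlim.const_mul (2*Cσ)
    exact hcont.eventually_le_const (by positivity)
  have hev : ∀ᶠ n : ℕ in atTop,
      (μ {ω | δ / 2 < ‖(n : ℝ)⁻¹ • (∑ i ∈ Finset.range n, X (i + 1) ω) - ν‖ ∧
          ∀ i ∈ Finset.range n, ‖X (i + 1) ω - ν‖ < (n : ℝ) ^ ((1 : ℝ) - δ')}).toReal ≤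
        (2*(d:ℝ)) * Real.exp (-(t/2)*(n:ℝ)^δ') := by
    filter_upwards [hsmallev, eventually_ge_atTop 1] with n hs hn
    set A : Fin d → Set Ω :=
      fun j => {ω | (n : ℝ) * t ≤ ∑ i ∈ Finset.range n, V n j 1 (i + 1) ω} with hAdef
    set B : Fin d → Set Ω :=
      fun j => {ω | (n : ℝ) * t ≤ ∑ i ∈ Finset.range n, V n j (-1) (i + 1) ω} with hBdef
    have hsub : μ {ω | δ / 2 < ‖(n : ℝ)⁻¹ • (∑ i ∈ Finset.range n, X (i + 1) ω) - ν‖ ∧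
        ∀ i ∈ Finset.range n, ‖X (i + 1) ω - ν‖ < (n : ℝ) ^ ((1 : ℝ) - δ')}
        ≤ ∑ j : Fin d, (μ (A j) + μ (B j)) :=
      (measure_mono (hincl n hn)).trans ((measure_iUnion_fintype_le μ _).trans
        (Finset.sum_le_sum fun j _ => measure_union_le _ _))
    have hfin : ∀ j ∈ (Finset.univ : Finset (Fin d)), μ (A j) + μ (B j) ≠ ⊤ :=
      fun j _ => ENNReal.add_ne_top.mpr ⟨measure_ne_top μ _, measure_ne_top μ _⟩
    have hbound : ∀ j : Fin d, (μ (A j)).toReal + (μ (B j)).toReal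
        ≤ 2 * Real.exp (-(t/2)*(n:ℝ)^δ') := by
      intro j
      have ha := hchern n hn hs j 1 (by norm_num)
      have hbb := hchern n hn hs j (-1) (by norm_num)
      rw [hAdef, hBdef]
      linarith
    calc (μ {ω | δ / 2 < ‖(n : ℝ)⁻¹ • (∑ i ∈ Finset.range n, X (i + 1) ω) - ν‖ ∧
          ∀ i ∈ Finset.range n, ‖X (i + 1) ω - ν‖ < (n : ℝ) ^ ((1 : ℝ) - δ')}).toReal
        ≤ (∑ j : Fin d, (μ (A j) + μ (B j))).toReal :=
          ENNReal.toReal_mono (ENNReal.sum_ne_top.mpr hfin) hsub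
      _ = ∑ j : Fin d, ((μ (A j)).toReal + (μ (B j)).toReal) := by
          rw [ENNReal.toReal_sum hfin]
          exact Finset.sum_congr rfl fun j _ =>
            ENNReal.toReal_add (measure_ne_top μ _) (measure_ne_top μ _)
      _ ≤ ∑ _j : Fin d, 2 * Real.exp (-(t/2)*(n:ℝ)^δ') :=
          Finset.sum_le_sum fun j _ => hbound j
      _ = (d:ℝ) * (2 * Real.exp (-(t/2)*(n:ℝ)^δ')) := by
          rw [Finset.sum_const, Finset.card_univ, Fintype.card_fin, nsmul_eq_mul]
      _ = (2*(d:ℝ)) * Real.exp (-(t/2)*(n:ℝ)^δ') := by ring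
  -- the explicit upper bound tends to zero
  have hRHSlim : Tendsto
      (fun n : ℕ => (2*(d:ℝ)) * Real.exp (-(t/2)*(n:ℝ)^δ') * (n:ℝ)^γ) atTop (nhds 0) := by
    have h1 : Tendsto (fun y : ℝ => y ^ (γ/δ') * Real.exp (-(t/2) * y)) atTop (nhds 0) :=
      tendsto_rpow_mul_exp_neg_mul_atTop_nhds_zero (γ/δ') (t/2) (half_pos htpos)
    have h2 : Tendsto (fun n : ℕ => (n:ℝ) ^ δ') atTop atTop :=
      (tendsto_rpow_atTop hδ'0).comp tendsto_natCast_atTop_atTop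
    have h3 := (h1.comp h2).const_mul (2*(d:ℝ))
    rw [mul_zero] at h3
    refine h3.congr fun n => ?_
    simp only [Function.comp_apply]
    rw [← Real.rpow_mul (Nat.cast_nonneg n)]
    rw [show δ' * (γ/δ') = γ by field_simp]
    ring
  -- squeeze
  refine tendsto_of_tendsto_of_tendsto_of_le_of_le' tendsto_const_nhds hRHSlim
    (Filter.Eventually.of_forall fun n =>
      mul_nonneg ENNReal.toReal_nonneg (Real.rpow_nonneg (Nat.cast_nonneg n) γ)) ?_
  filter_upwards [hev] with n hb2
  exact mul_le_mul_of_nonneg_right hb2 (Real.rpow_nonneg (Nat.cast_nonneg n) γ)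
end

section
/- Let X_1,...,X_n be iid random variables with continuous strictly increasing CDF F near x_p where F(x_p) = p, F twice differentiable near x_p with bounded second derivative and F'(x_p) > 0, and E[X²] < ∞. Let Y_n denote the sample p-quantile. Then sup_{n ≥ 1/p} E[Y_n²] < ∞. -/
open MeasureTheory ProbabilityTheory

lemma list_sum_map_eq_range (f : ℝ → ℝ) (s : List ℝ) :
    (s.map f).sum = ∑ i ∈ Finset.range s.length, f (s.getD i 0) := by
  induction s with
  | nil => simp
  | cons a t ih => simp [Finset.sum_range_succ', ih, add_comm]

lemma sorted_getD_mono (s : List ℝ) (h : s.Pairwise (· ≤ ·)) (i j : ℕ) (hij : i ≤ j)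
    (hj : j < s.length) : s.getD i 0 ≤ s.getD j 0 := by
  rcases eq_or_lt_of_le hij with rfl | hlt
  · rfl
  · rw [List.getD_eq_getElem _ _ (lt_of_le_of_lt hij hj), List.getD_eq_getElem _ _ hj]
    exact List.pairwise_iff_get.mp h ⟨i, _⟩ ⟨j, _⟩ hlt

-- low bound: (j+1) * (min s[j] 0)^2 ≤ Σ (min x 0)^2
lemma low_bound (s : List ℝ) (h : s.Pairwise (· ≤ ·)) (j : ℕ) (hj : j < s.length) :
    ((j:ℝ)+1) * (min (s.getD j 0) 0)^2 ≤ (s.map (fun x => (min x 0)^2)).sum := by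
  rw [list_sum_map_eq_range]
  calc ((j:ℝ)+1) * (min (s.getD j 0) 0)^2
      = ∑ i ∈ Finset.range (j+1), (min (s.getD j 0) 0)^2 := by
        simp [Finset.sum_const, mul_comm]
    _ ≤ ∑ i ∈ Finset.range (j+1), (min (s.getD i 0) 0)^2 := by
        apply Finset.sum_le_sum
        intro i hi
        have hi' : i ≤ j := Nat.lt_succ_iff.mp (Finset.mem_range.mp hi)
        have h1 : s.getD i 0 ≤ s.getD j 0 := sorted_getD_mono s h i j hi' hj
        have h2 : min (s.getD i 0) 0 ≤ min (s.getD j 0) 0 := min_le_min h1 le_rfl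
        have h3 : min (s.getD j 0) 0 ≤ 0 := min_le_right _ _
        nlinarith
    _ ≤ ∑ i ∈ Finset.range s.length, (min (s.getD i 0) 0)^2 := by
        apply Finset.sum_le_sum_of_subset_of_nonneg
        · exact Finset.range_subset_range.mpr hj
        · intro i _ _; positivity

lemma high_bound (s : List ℝ) (h : s.Pairwise (· ≤ ·)) (j : ℕ) (hj : j < s.length) :
    ((s.length - j : ℕ):ℝ) * (max (s.getD j 0) 0)^2 ≤ (s.map (fun x => (max x 0)^2)).sum := by
  rw [list_sum_map_eq_range]
  calc ((s.length - j : ℕ):ℝ) * (max (s.getD j 0) 0)^2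
      = ∑ i ∈ Finset.Ico j s.length, (max (s.getD j 0) 0)^2 := by
        simp [Finset.sum_const, Nat.card_Ico, mul_comm]
    _ ≤ ∑ i ∈ Finset.Ico j s.length, (max (s.getD i 0) 0)^2 := by
        apply Finset.sum_le_sum
        intro i hi
        obtain ⟨h1i, h2i⟩ := Finset.mem_Ico.mp hi
        have h1 : s.getD j 0 ≤ s.getD i 0 := sorted_getD_mono s h j i h1i h2i
        have h2 : max (s.getD j 0) 0 ≤ max (s.getD i 0) 0 := max_le_max h1 le_rfl
        have h3 : (0:ℝ) ≤ max (s.getD j 0) 0 := le_max_right _ _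
        nlinarith
    _ ≤ ∑ i ∈ Finset.range s.length, (max (s.getD i 0) 0)^2 := by
        apply Finset.sum_le_sum_of_subset_of_nonneg
        · intro i hi; exact Finset.mem_range.mpr (Finset.mem_Ico.mp hi).2
        · intro i _ _; positivity

lemma min_sq_le (x : ℝ) : (min x 0)^2 ≤ x^2 := by
  rcases le_or_gt x 0 with h | h
  · rw [min_eq_left h]
  · rw [min_eq_right h.le]; simpa using sq_nonneg x

lemma max_sq_le (x : ℝ) : (max x 0)^2 ≤ x^2 := by
  rcases le_or_gt 0 x with h | h
  · rw [max_eq_left h]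
  · rw [max_eq_right h.le]; simpa using sq_nonneg x


/-- The sample `p`-quantile `Y_n = (1-w_n) X_{([np])} + w_n X_{([np]+1)}` of a finite sample,
where `w_n = np - [np]` and `X_{(k)}` denotes the `k`-th order statistic. -/
noncomputable def sampleQuantile (p : ℝ) (l : List ℝ) : ℝ :=
  let s := l.insertionSort (· ≤ ·)
  let k := ⌊(l.length : ℝ) * p⌋₊
  let w := (l.length : ℝ) * p - k
  (1 - w) * s.getD (k - 1) 0 + w * s.getD k 0

lemma quantile_core (w a b S np n1p : ℝ) (hw0 : 0 ≤ w) (hw1 : w ≤ 1) (hab : a ≤ b)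
    (hm1 : (min a 0)^2 * np ≤ 2*S) (hm2 : (max b 0)^2 * n1p ≤ S)
    (hnp : 0 < np) (hn1p : 0 < n1p) :
    ((1-w)*a + w*b)^2 ≤ 2*S/np + S/n1p := by
  set Y := (1-w)*a + w*b with hY
  have hYa : a ≤ Y := by rw [hY]; nlinarith
  have hYb : Y ≤ b := by rw [hY]; nlinarith
  have hY2 : Y^2 ≤ (max b 0)^2 + (min a 0)^2 := by
    rcases le_or_gt 0 Y with h | h
    · nlinarith [le_max_left b 0, le_max_right b 0, sq_nonneg (min a 0)]
    · nlinarith [min_le_left a 0, min_le_right a 0, sq_nonneg (max b 0)]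
  have e1 : (max b 0)^2 ≤ S / n1p := (le_div_iff₀ hn1p).mpr hm2
  have e2 : (min a 0)^2 ≤ 2*S/np := (le_div_iff₀ hnp).mpr (by linarith)
  calc Y^2 ≤ (max b 0)^2 + (min a 0)^2 := hY2
    _ ≤ 2*S/np + S/n1p := by linarith

lemma quantile_sq_bound (p : ℝ) (hp : p ∈ Set.Ioo (0:ℝ) 1) (l : List ℝ)
    (hn : 1 ≤ (l.length : ℝ) * p) :
    (sampleQuantile p l)^2
      ≤ (2/p + 1/(1-p)) * ((l.map (fun x => x^2)).sum / l.length) := by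
  obtain ⟨hp0, hp1⟩ := hp
  have hY : sampleQuantile p l =
      (1 - ((l.length : ℝ) * p - ⌊(l.length : ℝ) * p⌋₊)) *
        (l.insertionSort (· ≤ ·)).getD (⌊(l.length : ℝ) * p⌋₊ - 1) 0 +
      ((l.length : ℝ) * p - ⌊(l.length : ℝ) * p⌋₊) *
        (l.insertionSort (· ≤ ·)).getD ⌊(l.length : ℝ) * p⌋₊ 0 := rfl
  rw [hY]
  have hs : (l.insertionSort (· ≤ ·)).Pairwise (· ≤ ·) := List.pairwise_insertionSort (· ≤ ·) l
  have hlen : (l.insertionSort (· ≤ ·)).length = l.length := l.length_insertionSort (· ≤ ·)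
  have hnp0 : (0:ℝ) < (l.length : ℝ) * p := lt_of_lt_of_le one_pos hn
  have hnpos : (0:ℝ) < (l.length : ℝ) := by nlinarith
  have hk1 : 1 ≤ ⌊(l.length : ℝ) * p⌋₊ := Nat.le_floor (by exact_mod_cast hn)
  have hkle : ((⌊(l.length : ℝ) * p⌋₊ : ℕ):ℝ) ≤ (l.length : ℝ) * p := Nat.floor_le (le_of_lt hnp0)
  have hkgt : (l.length : ℝ) * p < (⌊(l.length : ℝ) * p⌋₊ : ℝ) + 1 := Nat.lt_floor_add_one _
  have hkltn : ⌊(l.length : ℝ) * p⌋₊ < l.length := by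
    have : ((⌊(l.length : ℝ) * p⌋₊ : ℕ):ℝ) < (l.length:ℝ) := lt_of_le_of_lt hkle (by nlinarith)
    exact_mod_cast this
  have hS0 : 0 ≤ (l.map (fun x => x^2)).sum := by
    apply List.sum_nonneg
    intro x hx
    obtain ⟨y, _, rfl⟩ := List.mem_map.mp hx
    positivity
  have hpermsum : ∀ f : ℝ → ℝ, ((l.insertionSort (· ≤ ·)).map f).sum = (l.map f).sum :=
    fun f => ((l.perm_insertionSort (· ≤ ·)).map f).sum_eq
  have hlowS : ((l.map (fun x => (min x 0)^2)).sum) ≤ (l.map (fun x => x^2)).sum :=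
    List.sum_le_sum (fun x _ => min_sq_le x)
  have hhighS : ((l.map (fun x => (max x 0)^2)).sum) ≤ (l.map (fun x => x^2)).sum :=
    List.sum_le_sum (fun x _ => max_sq_le x)
  have hlow : (⌊(l.length : ℝ) * p⌋₊ : ℝ) *
      (min ((l.insertionSort (· ≤ ·)).getD (⌊(l.length : ℝ) * p⌋₊ - 1) 0) 0)^2
      ≤ (l.map (fun x => x^2)).sum := by
    have h := low_bound (l.insertionSort (· ≤ ·)) hs (⌊(l.length : ℝ) * p⌋₊ - 1) (by omega)
    rw [hpermsum] at h
    have hcast : ((⌊(l.length : ℝ) * p⌋₊ - 1 : ℕ):ℝ) + 1 = (⌊(l.length : ℝ) * p⌋₊ : ℝ) := by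
      have h2 : (⌊(l.length : ℝ) * p⌋₊ - 1) + 1 = ⌊(l.length : ℝ) * p⌋₊ := by omega
      exact_mod_cast congrArg (Nat.cast (R := ℝ)) h2
    rw [hcast] at h
    exact le_trans h hlowS
  have hhigh : ((l.length:ℝ) - ⌊(l.length : ℝ) * p⌋₊) *
      (max ((l.insertionSort (· ≤ ·)).getD (⌊(l.length : ℝ) * p⌋₊) 0) 0)^2
      ≤ (l.map (fun x => x^2)).sum := by
    have h := high_bound (l.insertionSort (· ≤ ·)) hs (⌊(l.length : ℝ) * p⌋₊) (by omega)
    rw [hpermsum, hlen] at h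
    rw [Nat.cast_sub (le_of_lt hkltn)] at h
    exact le_trans h hhighS
  have hab : (l.insertionSort (· ≤ ·)).getD (⌊(l.length : ℝ) * p⌋₊ - 1) 0
      ≤ (l.insertionSort (· ≤ ·)).getD (⌊(l.length : ℝ) * p⌋₊) 0 :=
    sorted_getD_mono _ hs _ _ (Nat.sub_le _ _) (by omega)
  -- abbreviations as opaque reals
  generalize hA : (l.insertionSort (· ≤ ·)).getD (⌊(l.length : ℝ) * p⌋₊ - 1) 0 = A at hab hlow
  generalize hB : (l.insertionSort (· ≤ ·)).getD (⌊(l.length : ℝ) * p⌋₊) 0 = B at hab hhigh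
  generalize hSdef : (l.map (fun x => x^2)).sum = S at hS0 hlow hhigh ⊢
  have hkhalf : (l.length:ℝ) * p / 2 ≤ (⌊(l.length : ℝ) * p⌋₊ : ℝ) := by
    rcases le_or_gt 2 ((l.length:ℝ) * p) with h | h
    · linarith
    · have : (1:ℝ) ≤ (⌊(l.length : ℝ) * p⌋₊ : ℝ) := by exact_mod_cast hk1
      linarith
  have hnk : (l.length:ℝ) * (1 - p) ≤ (l.length:ℝ) - ⌊(l.length : ℝ) * p⌋₊ := by nlinarith
  have h1p : (0:ℝ) < 1 - p := by linarith
  have hn1p : (0:ℝ) < (l.length:ℝ) * (1-p) := by positivity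
  have hm1 : (min A 0)^2 * ((l.length:ℝ) * p) ≤ 2 * S := by nlinarith [sq_nonneg (min A 0)]
  have hm2 : (max B 0)^2 * ((l.length:ℝ) * (1-p)) ≤ S := by nlinarith [sq_nonneg (max B 0)]
  have key := quantile_core ((l.length : ℝ) * p - ⌊(l.length : ℝ) * p⌋₊) A B S
    ((l.length:ℝ) * p) ((l.length:ℝ) * (1-p)) (by linarith) (by linarith) hab hm1 hm2 hnp0 hn1p
  calc ((1 - ((l.length : ℝ) * p - ⌊(l.length : ℝ) * p⌋₊)) * A +
        ((l.length : ℝ) * p - ⌊(l.length : ℝ) * p⌋₊) * B)^2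
      ≤ 2*S/((l.length:ℝ) * p) + S/((l.length:ℝ) * (1-p)) := key
    _ = (2/p + 1/(1-p)) * (S / (l.length:ℝ)) := by field_simp

lemma list_range_map_sum (n : ℕ) (h : ℕ → ℝ) :
    ((List.range n).map h).sum = ∑ i ∈ Finset.range n, h i := by
  induction n with
  | zero => simp
  | succ m ih => simp [List.range_succ, Finset.sum_range_succ, ih]


/-- Uniform second-moment bound for sample quantiles: `sup_{n ≥ 1/p} E[Y_n²] < ∞`. -/
theorem stmt_17 {Ω : Type*} [MeasurableSpace Ω] (μ : Measure Ω) [IsProbabilityMeasure μ]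
    (X : ℕ → Ω → ℝ) (hXmeas : ∀ i, Measurable (X i))
    (hindep : iIndepFun X μ)
    (hident : ∀ i : ℕ, IdentDistrib (X i) (X 1) μ μ)
    (p : ℝ) (hp : p ∈ Set.Ioo (0 : ℝ) 1)
    (F : ℝ → ℝ) (hF : ∀ x, F x = (μ {ω | X 1 ω ≤ x}).toReal)
    (xp : ℝ) (hxp : F xp = p)
    (ε : ℝ) (hε : 0 < ε)
    (hFsmooth : ContDiffOn ℝ 2 F (Metric.ball xp ε))
    (hFmono : StrictMonoOn F (Metric.ball xp ε))
    (hFsecond : ∃ K : ℝ, ∀ x ∈ Metric.ball xp ε, |deriv (deriv F) x| ≤ K)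
    (hfpos : 0 < deriv F xp)
    (hmom : Integrable (fun ω => (X 1 ω) ^ 2) μ) :
    ∃ C : ℝ, ∀ n : ℕ, 1 / p ≤ (n : ℝ) →
      ∫ ω, (sampleQuantile p ((List.range n).map (fun i => X (i + 1) ω))) ^ 2 ∂μ ≤ C := by
  obtain ⟨hp0, hp1⟩ := hp
  have hsq : Measurable (fun x : ℝ => x^2) := by measurability
  have hintX : ∀ i, Integrable (fun ω => (X i ω)^2) μ := by
    intro i
    have h := ((hident i).comp hsq).integrable_iff.mpr ?_
    · simpa [Function.comp_def] using h
    · simpa [Function.comp_def] using hmom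
  have hIeq : ∀ i, ∫ ω, (X i ω)^2 ∂μ = ∫ ω, (X 1 ω)^2 ∂μ := by
    intro i
    have h := ((hident i).comp hsq).integral_eq
    simpa [Function.comp_def] using h
  refine ⟨(2/p + 1/(1-p)) * ∫ ω, (X 1 ω)^2 ∂μ, ?_⟩
  intro n hn
  have hnp : 1 ≤ (n:ℝ) * p := by
    have := (div_le_iff₀ hp0).mp hn
    linarith
  have hn0 : 0 < n := by
    rcases Nat.eq_zero_or_pos n with rfl | h
    · simp at hnp; nlinarith
    · exact h
  set g : Ω → ℝ := fun ω => (2/p + 1/(1-p)) * ((∑ i ∈ Finset.range n, (X (i+1) ω)^2) / n)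
    with hg_def
  have hpw : ∀ ω, (sampleQuantile p ((List.range n).map (fun i => X (i + 1) ω)))^2 ≤ g ω := by
    intro ω
    have hlenL : ((List.range n).map (fun i => X (i + 1) ω)).length = n := by simp
    have h := quantile_sq_bound p ⟨hp0, hp1⟩ ((List.range n).map (fun i => X (i + 1) ω))
      (by rw [hlenL]; exact hnp)
    have hsum : (((List.range n).map (fun i => X (i + 1) ω)).map (fun x => x^2)).sum
        = ∑ i ∈ Finset.range n, (X (i+1) ω)^2 := by
      rw [List.map_map]
      exact list_range_map_sum n _
    rw [hlenL, hsum] at h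
    exact h
  have hgint : Integrable g μ :=
    (((integrable_finset_sum (Finset.range n) (fun i _ => hintX (i+1))).div_const
      (n:ℝ)).const_mul _)
  have hmono := integral_mono_of_nonneg (Filter.Eventually.of_forall (fun ω => sq_nonneg _))
    hgint (Filter.Eventually.of_forall hpw)
  refine le_trans hmono ?_
  have : ∫ ω, g ω ∂μ = (2/p + 1/(1-p)) * ((∑ i ∈ Finset.range n, ∫ ω, (X (i+1) ω)^2 ∂μ) / n) := by
    rw [hg_def]
    rw [integral_const_mul]
    congr 1
    rw [integral_div]
    congr 1
    exact integral_finset_sum _ (fun i _ => hintX (i+1))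
  rw [this]
  have hsum : (∑ i ∈ Finset.range n, ∫ ω, (X (i+1) ω)^2 ∂μ) = n * ∫ ω, (X 1 ω)^2 ∂μ := by
    rw [Finset.sum_congr rfl (fun i _ => hIeq (i+1))]
    simp [mul_comm]
  rw [hsum]
  have hne : (n:ℝ) ≠ 0 := by positivity
  field_simp
  exact le_rfl
end

section
/- Under the Bahadur representation Y_n = x_p + (np − Z_n)/(n f(x_p)) + R_n with R_n = O(n^{−3/4} log n) a.s., the multilevel quantile difference Δ_n = Y_{2^{n+1}} − (1/2)(Y^O_{2^n} + Y^E_{2^n}) satisfies Δ_n = R_{2^{n+1}} − (1/2)(R^O_{2^n} + R^E_{2^n}) = O(n·2^{−3n/4}) almost surely; in particular Δ_n² = O(n²·2^{−3n/2}). -/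
open MeasureTheory

/-- Cancellation of the linear (Bahadur) term in the multilevel quantile difference:
`Δ_n = Y_{2^{n+1}} − (Y^O_{2^n}+Y^E_{2^n})/2 = R_{2^{n+1}} − (R^O_{2^n}+R^E_{2^n})/2
     = O(n·2^{−3n/4})` a.s., hence `Δ_n² = O(n²·2^{−3n/2})`. -/
theorem stmt_18 {Ω : Type*} [MeasurableSpace Ω] (μ : Measure Ω) [IsProbabilityMeasure μ]
    (p xp fxp : ℝ) (hf : fxp ≠ 0)
    (Y YO YE Z ZO ZE R RO RE : ℕ → Ω → ℝ)
    (hZ : ∀ n : ℕ, ∀ ω, Z (2 ^ (n + 1)) ω = ZO (2 ^ n) ω + ZE (2 ^ n) ω)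
    (hY : ∀ n : ℕ, ∀ ω, Y n ω = xp + ((n : ℝ) * p - Z n ω) / ((n : ℝ) * fxp) + R n ω)
    (hYO : ∀ n : ℕ, ∀ ω, YO n ω = xp + ((n : ℝ) * p - ZO n ω) / ((n : ℝ) * fxp) + RO n ω)
    (hYE : ∀ n : ℕ, ∀ ω, YE n ω = xp + ((n : ℝ) * p - ZE n ω) / ((n : ℝ) * fxp) + RE n ω)
    (hR : ∀ᵐ ω ∂μ, ∃ C : ℝ, ∀ n : ℕ, |R (2 ^ n) ω| ≤ C * ((n : ℝ) + 1) * (2 : ℝ) ^ (-(3 * (n : ℝ) / 4)))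
    (hRO : ∀ᵐ ω ∂μ, ∃ C : ℝ, ∀ n : ℕ, |RO (2 ^ n) ω| ≤ C * ((n : ℝ) + 1) * (2 : ℝ) ^ (-(3 * (n : ℝ) / 4)))
    (hRE : ∀ᵐ ω ∂μ, ∃ C : ℝ, ∀ n : ℕ, |RE (2 ^ n) ω| ≤ C * ((n : ℝ) + 1) * (2 : ℝ) ^ (-(3 * (n : ℝ) / 4))) :
    (∀ n : ℕ, ∀ ω,
      Y (2 ^ (n + 1)) ω - (YO (2 ^ n) ω + YE (2 ^ n) ω) / 2
        = R (2 ^ (n + 1)) ω - (RO (2 ^ n) ω + RE (2 ^ n) ω) / 2) ∧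
    (∀ᵐ ω ∂μ, ∃ C : ℝ, ∀ n : ℕ,
      |Y (2 ^ (n + 1)) ω - (YO (2 ^ n) ω + YE (2 ^ n) ω) / 2|
          ≤ C * ((n : ℝ) + 1) * (2 : ℝ) ^ (-(3 * (n : ℝ) / 4)) ∧
      (Y (2 ^ (n + 1)) ω - (YO (2 ^ n) ω + YE (2 ^ n) ω) / 2) ^ 2
          ≤ C ^ 2 * ((n : ℝ) + 1) ^ 2 * (2 : ℝ) ^ (-(3 * (n : ℝ) / 2))) := by
  have key : ∀ n : ℕ, ∀ ω,
      Y (2 ^ (n + 1)) ω - (YO (2 ^ n) ω + YE (2 ^ n) ω) / 2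
        = R (2 ^ (n + 1)) ω - (RO (2 ^ n) ω + RE (2 ^ n) ω) / 2 := by
    intro n ω
    have h2 : ((2 : ℝ) ^ n : ℝ) ≠ 0 := by positivity
    rw [hY, hYO, hYE, hZ]
    push_cast
    field_simp
    ring
  refine ⟨key, ?_⟩
  filter_upwards [hR, hRO, hRE] with ω ⟨C1, h1⟩ ⟨C2, h2⟩ ⟨C3, h3⟩
  have hC1 : 0 ≤ C1 := by
    have := h1 0; simp at this
    exact le_trans (abs_nonneg _) this
  have hC2 : 0 ≤ C2 := by
    have := h2 0; simp at this
    exact le_trans (abs_nonneg _) this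
  have hC3 : 0 ≤ C3 := by
    have := h3 0; simp at this
    exact le_trans (abs_nonneg _) this
  refine ⟨2 * C1 + (C2 + C3) / 2, fun n => ?_⟩
  have hpow : (0:ℝ) < (2 : ℝ) ^ (-(3 * (n : ℝ) / 4)) := Real.rpow_pos_of_pos two_pos _
  have hbound : |Y (2 ^ (n + 1)) ω - (YO (2 ^ n) ω + YE (2 ^ n) ω) / 2|
      ≤ (2 * C1 + (C2 + C3) / 2) * ((n : ℝ) + 1) * (2 : ℝ) ^ (-(3 * (n : ℝ) / 4)) := by
    rw [key]
    have hR1 : |R (2 ^ (n + 1)) ω| ≤ 2 * C1 * ((n : ℝ) + 1) * (2 : ℝ) ^ (-(3 * (n : ℝ) / 4)) := by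
      refine (h1 (n + 1)).trans ?_
      push_cast
      have e1 : ((n : ℝ) + 1 + 1) ≤ 2 * ((n : ℝ) + 1) := by linarith [Nat.cast_nonneg (α := ℝ) n]
      have e2 : (2 : ℝ) ^ (-(3 * ((n : ℝ) + 1) / 4)) ≤ (2 : ℝ) ^ (-(3 * (n : ℝ) / 4)) := by
        apply Real.rpow_le_rpow_of_exponent_le one_le_two
        linarith
      have := mul_le_mul (mul_le_mul_of_nonneg_left e1 hC1) e2
        (le_of_lt (Real.rpow_pos_of_pos two_pos _)) (by positivity)
      calc C1 * ((n : ℝ) + 1 + 1) * (2 : ℝ) ^ (-(3 * ((n : ℝ) + 1) / 4))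
          ≤ C1 * (2 * ((n : ℝ) + 1)) * (2 : ℝ) ^ (-(3 * (n : ℝ) / 4)) := this
        _ = 2 * C1 * ((n : ℝ) + 1) * (2 : ℝ) ^ (-(3 * (n : ℝ) / 4)) := by ring
    calc |R (2 ^ (n + 1)) ω - (RO (2 ^ n) ω + RE (2 ^ n) ω) / 2|
        ≤ |R (2 ^ (n + 1)) ω| + (|RO (2 ^ n) ω| + |RE (2 ^ n) ω|) / 2 := by
          have := abs_sub (R (2 ^ (n + 1)) ω) ((RO (2 ^ n) ω + RE (2 ^ n) ω) / 2)
          have h4 : |(RO (2 ^ n) ω + RE (2 ^ n) ω) / 2| ≤ (|RO (2 ^ n) ω| + |RE (2 ^ n) ω|) / 2 := by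
            rw [abs_div, abs_two]
            linarith [abs_add_le (RO (2 ^ n) ω) (RE (2 ^ n) ω)]
          linarith [abs_sub (R (2 ^ (n + 1)) ω) ((RO (2 ^ n) ω + RE (2 ^ n) ω) / 2)]
      _ ≤ 2 * C1 * ((n : ℝ) + 1) * (2 : ℝ) ^ (-(3 * (n : ℝ) / 4))
          + (C2 * ((n : ℝ) + 1) * (2 : ℝ) ^ (-(3 * (n : ℝ) / 4))
            + C3 * ((n : ℝ) + 1) * (2 : ℝ) ^ (-(3 * (n : ℝ) / 4))) / 2 := by
          have := h2 n; have := h3 n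
          linarith [h2 n, h3 n, hR1]
      _ = (2 * C1 + (C2 + C3) / 2) * ((n : ℝ) + 1) * (2 : ℝ) ^ (-(3 * (n : ℝ) / 4)) := by ring
  refine ⟨hbound, ?_⟩
  have hsq := mul_self_le_mul_self (abs_nonneg _) hbound
  rw [abs_mul_abs_self] at hsq
  calc (Y (2 ^ (n + 1)) ω - (YO (2 ^ n) ω + YE (2 ^ n) ω) / 2) ^ 2
      = (Y (2 ^ (n + 1)) ω - (YO (2 ^ n) ω + YE (2 ^ n) ω) / 2)
        * (Y (2 ^ (n + 1)) ω - (YO (2 ^ n) ω + YE (2 ^ n) ω) / 2) := sq _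
    _ ≤ ((2 * C1 + (C2 + C3) / 2) * ((n : ℝ) + 1) * (2 : ℝ) ^ (-(3 * (n : ℝ) / 4)))
        * ((2 * C1 + (C2 + C3) / 2) * ((n : ℝ) + 1) * (2 : ℝ) ^ (-(3 * (n : ℝ) / 4))) := hsq
    _ = (2 * C1 + (C2 + C3) / 2) ^ 2 * ((n : ℝ) + 1) ^ 2
        * ((2 : ℝ) ^ (-(3 * (n : ℝ) / 4)) * (2 : ℝ) ^ (-(3 * (n : ℝ) / 4))) := by ring
    _ = (2 * C1 + (C2 + C3) / 2) ^ 2 * ((n : ℝ) + 1) ^ 2 * (2 : ℝ) ^ (-(3 * (n : ℝ) / 2)) := by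
        rw [← Real.rpow_add two_pos]
        congr 1
        ring
end

section
/- Let Δ_n be random variables with E[Δ_n²] ≤ C·n²·2^{−3n/2} for all n ≥ n_b, and let N be geometric on {n_b, n_b+1, ...} with p(n) = r(1−r)^{n−n_b} where 1/2 < r < 1 − 2^{−3/2}. Then ∑_{n=n_b}^∞ E[Δ_n²]/p(n) < ∞, so Z = Δ_N/p(N) (with N independent of (Δ_n)) has finite second moment, while the expected number of samples E[2^{N+1}] < ∞. -/
open MeasureTheory ProbabilityTheory
open scoped ENNReal

/-- Partition of a lintegral along the level sets of `N`, when `N ≥ nb` everywhere. -/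
lemma aux_partition {Ω : Type*} [MeasurableSpace Ω] (μ : Measure Ω)
    (nb : ℕ) (N : Ω → ℕ) (hN : Measurable N) (hNnb : ∀ ω, nb ≤ N ω)
    (g : Ω → ℝ≥0∞) (hg : Measurable g) :
    ∫⁻ ω, g ω ∂μ = ∑' k : ℕ, ∫⁻ ω in {ω | N ω = k + nb}, g ω ∂μ := by
  have hA : ∀ k : ℕ, MeasurableSet {ω | N ω = k + nb} := fun k => hN (measurableSet_singleton _)
  have hpt : ∀ ω, g ω = ∑' k : ℕ, Set.indicator {ω' | N ω' = k + nb} g ω := by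
    intro ω
    rw [tsum_eq_single (N ω - nb) ?_]
    · rw [Set.indicator_of_mem]
      have := hNnb ω
      simp only [Set.mem_setOf_eq]
      omega
    · intro k hk
      apply Set.indicator_of_notMem
      simp only [Set.mem_setOf_eq]
      have := hNnb ω
      intro h
      exact hk (by omega)
  calc ∫⁻ ω, g ω ∂μ = ∫⁻ ω, ∑' k : ℕ, Set.indicator {ω' | N ω' = k + nb} g ω ∂μ := by
        congr 1; funext ω; exact hpt ω
    _ = ∑' k : ℕ, ∫⁻ ω, Set.indicator {ω' | N ω' = k + nb} g ω ∂μ :=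
        lintegral_tsum fun k => (hg.indicator (hA k)).aemeasurable
    _ = _ := by
        refine tsum_congr fun k => ?_
        exact lintegral_indicator (hA k) g

set_option maxHeartbeats 1600000 in
/-- Finite second moment and finite expected sampling cost of the randomized quantile
estimator `Z = Δ_N / p(N)` with a shifted geometric `N` on `{n_b, n_b+1, …}` with
`1/2 < r < 1 − 2^{−3/2}`. -/
theorem stmt_19 {Ω : Type*} [MeasurableSpace Ω] (μ : Measure Ω) [IsProbabilityMeasure μ]
    (nb : ℕ) (r : ℝ) (hr : r ∈ Set.Ioo (1 / 2 : ℝ) (1 - 2 ^ (-(3 / 2 : ℝ))))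
    (N : Ω → ℕ) (hN : Measurable N) (hNnb : ∀ ω, nb ≤ N ω)
    (hgeo : ∀ n : ℕ, nb ≤ n → μ {ω | N ω = n} = ENNReal.ofReal (r * (1 - r) ^ (n - nb)))
    (Δ : ℕ → Ω → ℝ) (hΔmeas : ∀ n, Measurable (Δ n))
    (hΔsq : ∀ n, Integrable (fun ω => (Δ n ω) ^ 2) μ)
    (C : ℝ) (hC : 0 < C)
    (hbound : ∀ n : ℕ, nb ≤ n →
      ∫ ω, (Δ n ω) ^ 2 ∂μ ≤ C * (n : ℝ) ^ 2 * (2 : ℝ) ^ (-(3 * (n : ℝ) / 2)))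
    (hindep : IndepFun N (fun ω => fun n => Δ n ω) μ) :
    Summable (fun k : ℕ => (∫ ω, (Δ (k + nb) ω) ^ 2 ∂μ) / (r * (1 - r) ^ k)) ∧
    Integrable (fun ω => (Δ (N ω) ω / (r * (1 - r) ^ (N ω - nb))) ^ 2) μ ∧
    Integrable (fun ω => (2 : ℝ) ^ (N ω + 1)) μ := by
  obtain ⟨hr1, hr2⟩ := hr
  set s : ℝ := (2 : ℝ) ^ (-(3 / 2 : ℝ)) with hs_def
  have hs0 : 0 < s := Real.rpow_pos_of_pos two_pos _
  have h1r0 : 0 < 1 - r := by linarith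
  have h1r : 1 - r < 1 / 2 := by linarith
  have hr0 : 0 < r := by linarith
  have hs_lt : s < 1 - r := by linarith
  have hq0 : 0 < s / (1 - r) := div_pos hs0 h1r0
  have hq1 : s / (1 - r) < 1 := (div_lt_one h1r0).2 hs_lt
  have hp : ∀ k : ℕ, 0 < r * (1 - r) ^ k := fun k => mul_pos hr0 (pow_pos h1r0 k)
  have hsn : ∀ n : ℕ, (2 : ℝ) ^ (-(3 * (n : ℝ) / 2)) = s ^ n := by
    intro n
    rw [← Real.rpow_natCast s n, hs_def, ← Real.rpow_mul (by norm_num : (0:ℝ) ≤ 2)]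
    congr 1
    ring
  have hInt_nonneg : ∀ n, 0 ≤ ∫ ω, (Δ n ω) ^ 2 ∂μ :=
    fun n => integral_nonneg fun ω => sq_nonneg _
  -- Part 1 : summability
  have hsum1 : Summable (fun k : ℕ => (∫ ω, (Δ (k + nb) ω) ^ 2 ∂μ) / (r * (1 - r) ^ k)) := by
    have hb : Summable (fun k : ℕ =>
        (C * (1 - r) ^ nb / r) * ((((k + nb : ℕ)) : ℝ) ^ 2 * (s / (1 - r)) ^ (k + nb))) := by
      apply Summable.mul_left
      exact (_root_.summable_nat_add_iff nb).2
        (summable_pow_mul_geometric_of_norm_lt_one (R := ℝ) 2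
          (by rwa [Real.norm_eq_abs, abs_of_pos hq0]))
    refine Summable.of_nonneg_of_le
      (fun k => div_nonneg (hInt_nonneg _) (hp k).le) (fun k => ?_) hb
    have h1 : (∫ ω, (Δ (k + nb) ω) ^ 2 ∂μ) / (r * (1 - r) ^ k)
        ≤ (C * (((k + nb : ℕ)) : ℝ) ^ 2 * s ^ (k + nb)) / (r * (1 - r) ^ k) := by
      refine (div_le_div_iff_of_pos_right (hp k)).2 ?_
      have := hbound (k + nb) (by omega)
      rwa [hsn (k + nb)] at this
    refine h1.trans_eq ?_
    rw [div_pow, pow_add (1 - r) k nb]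
    field_simp
  refine ⟨hsum1, ?_, ?_⟩
  -- measurability of the main function
  · have hA : ∀ n : ℕ, MeasurableSet {ω | N ω = n} := fun n => hN (measurableSet_singleton n)
    have hmeas2 : Measurable fun ω => (Δ (N ω) ω / (r * (1 - r) ^ (N ω - nb))) ^ 2 := by
      have h : Measurable fun p : Ω × ℕ => (Δ p.2 p.1 / (r * (1 - r) ^ (p.2 - nb))) ^ 2 :=
        measurable_from_prod_countable_left fun n =>
          ((hΔmeas n).div_const (r * (1 - r) ^ (n - nb))).pow_const 2
      exact h.comp (measurable_id.prodMk hN)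
    refine ⟨hmeas2.aestronglyMeasurable, ?_⟩
    rw [hasFiniteIntegral_iff_ofReal (ae_of_all _ fun ω => sq_nonneg _)]
    set g : Ω → ℝ≥0∞ :=
      fun ω => ENNReal.ofReal ((Δ (N ω) ω / (r * (1 - r) ^ (N ω - nb))) ^ 2) with hg_def
    have hgmeas : Measurable g := hmeas2.ennreal_ofReal
    rw [aux_partition μ nb N hN hNnb g hgmeas]
    have hterm : ∀ k : ℕ, ∫⁻ ω in {ω | N ω = k + nb}, g ω ∂μ
        = ENNReal.ofReal ((∫ ω, (Δ (k + nb) ω) ^ 2 ∂μ) / (r * (1 - r) ^ k)) := by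
      intro k
      set n := k + nb with hn_def
      have hc0 : 0 < r * (1 - r) ^ k := hp k
      -- on the set, g equals ofReal (Δ n ^2) / ofReal (c^2)
      have hstep1 : ∫⁻ ω in {ω | N ω = n}, g ω ∂μ
          = ∫⁻ ω in {ω | N ω = n},
              ENNReal.ofReal ((Δ n ω) ^ 2) * (ENNReal.ofReal ((r * (1 - r) ^ k) ^ 2))⁻¹ ∂μ := by
        refine setLIntegral_congr_fun (hA n) (fun ω hω => ?_)
        have hωn : N ω = n := hω
        rw [hg_def]
        simp only [hωn]
        rw [show n - nb = k from by omega]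
        rw [div_pow, ENNReal.ofReal_div_of_pos (pow_pos hc0 2), div_eq_mul_inv]
      rw [hstep1, lintegral_mul_const'' _ ((hΔmeas n).pow_const 2).ennreal_ofReal.aemeasurable]
      -- independence step
      have hXY : IndepFun (fun ω => if N ω = n then (1 : ℝ≥0∞) else 0)
          (fun ω => ENNReal.ofReal ((Δ n ω) ^ 2)) μ := by
        have h1 : Measurable fun m : ℕ => if m = n then (1 : ℝ≥0∞) else 0 :=
          measurable_of_countable _
        have h2 : Measurable fun v : ℕ → ℝ => ENNReal.ofReal ((v n) ^ 2) :=
          ((measurable_pi_apply n).pow_const 2).ennreal_ofReal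
        exact hindep.comp h1 h2
      have hmul := lintegral_mul_eq_lintegral_mul_lintegral_of_indepFun
        (f := fun ω => if N ω = n then (1 : ℝ≥0∞) else 0)
        (g := fun ω => ENNReal.ofReal ((Δ n ω) ^ 2))
        (show Measurable fun ω => if N ω = n then (1 : ℝ≥0∞) else 0 from
          (measurable_of_countable (fun m : ℕ => if m = n then (1 : ℝ≥0∞) else 0)).comp hN)
        ((hΔmeas n).pow_const 2).ennreal_ofReal hXY
      have hind : ∫⁻ ω in {ω | N ω = n}, ENNReal.ofReal ((Δ n ω) ^ 2) ∂μ
          = μ {ω | N ω = n} * ∫⁻ ω, ENNReal.ofReal ((Δ n ω) ^ 2) ∂μ := by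
        rw [← lintegral_indicator (hA n)]
        have : ∀ ω, Set.indicator {ω' | N ω' = n}
            (fun ω => ENNReal.ofReal ((Δ n ω) ^ 2)) ω
            = ((fun ω => if N ω = n then (1 : ℝ≥0∞) else 0) *
               fun ω => ENNReal.ofReal ((Δ n ω) ^ 2)) ω := by
          intro ω
          simp [Set.indicator_apply, ite_mul, Set.mem_setOf_eq]
        calc ∫⁻ ω, Set.indicator {ω' | N ω' = n}
              (fun ω => ENNReal.ofReal ((Δ n ω) ^ 2)) ω ∂μ
            = ∫⁻ ω, ((fun ω => if N ω = n then (1 : ℝ≥0∞) else 0) *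
               fun ω => ENNReal.ofReal ((Δ n ω) ^ 2)) ω ∂μ := by
              congr 1; funext ω; exact this ω
          _ = (∫⁻ ω, (if N ω = n then (1 : ℝ≥0∞) else 0) ∂μ) *
              ∫⁻ ω, ENNReal.ofReal ((Δ n ω) ^ 2) ∂μ := hmul
          _ = μ {ω | N ω = n} * ∫⁻ ω, ENNReal.ofReal ((Δ n ω) ^ 2) ∂μ := by
              congr 1
              have : (fun ω => if N ω = n then (1 : ℝ≥0∞) else 0)
                  = {ω | N ω = n}.indicator (fun _ => (1 : ℝ≥0∞)) := by
                funext ω; simp [Set.indicator_apply, Set.mem_setOf_eq]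
              rw [this, lintegral_indicator_const (hA n), one_mul]
      rw [hind]
      have hI : ∫⁻ ω, ENNReal.ofReal ((Δ n ω) ^ 2) ∂μ
          = ENNReal.ofReal (∫ ω, (Δ n ω) ^ 2 ∂μ) :=
        (ofReal_integral_eq_lintegral_ofReal (hΔsq n)
          (ae_of_all _ fun ω => sq_nonneg _)).symm
      rw [hI, hgeo n (by omega)]
      have hnnb : n - nb = k := by omega
      rw [hnnb, ← ENNReal.ofReal_mul hc0.le,
        ← ENNReal.ofReal_inv_of_pos (pow_pos hc0 2), ← ENNReal.ofReal_mul
          (by positivity)]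
      congr 1
      field_simp
    calc ∑' k : ℕ, ∫⁻ ω in {ω | N ω = k + nb}, g ω ∂μ
        = ∑' k : ℕ, ENNReal.ofReal ((∫ ω, (Δ (k + nb) ω) ^ 2 ∂μ) / (r * (1 - r) ^ k)) :=
          tsum_congr hterm
      _ = ENNReal.ofReal (∑' k : ℕ, (∫ ω, (Δ (k + nb) ω) ^ 2 ∂μ) / (r * (1 - r) ^ k)) :=
          (ENNReal.ofReal_tsum_of_nonneg
            (fun k => div_nonneg (hInt_nonneg _) (hp k).le) hsum1).symm
      _ < ⊤ := ENNReal.ofReal_lt_top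
  -- Part 3 : expected cost
  · have hA : ∀ n : ℕ, MeasurableSet {ω | N ω = n} := fun n => hN (measurableSet_singleton n)
    have hmeas3 : Measurable fun ω => (2 : ℝ) ^ (N ω + 1) := by
      have h : Measurable fun p : Ω × ℕ => (2 : ℝ) ^ (p.2 + 1) :=
        measurable_from_prod_countable_left fun n =>
          (measurable_const : Measurable fun _x : Ω => (2 : ℝ) ^ (n + 1))
      exact h.comp (measurable_id.prodMk hN)
    refine ⟨hmeas3.aestronglyMeasurable, ?_⟩
    rw [hasFiniteIntegral_iff_ofReal (ae_of_all _ fun ω => by positivity)]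
    set g : Ω → ℝ≥0∞ := fun ω => ENNReal.ofReal ((2 : ℝ) ^ (N ω + 1)) with hg_def
    have hgmeas : Measurable g := hmeas3.ennreal_ofReal
    rw [aux_partition μ nb N hN hNnb g hgmeas]
    have hterm : ∀ k : ℕ, ∫⁻ ω in {ω | N ω = k + nb}, g ω ∂μ
        = ENNReal.ofReal (r * (1 - r) ^ k * (2 : ℝ) ^ (k + nb + 1)) := by
      intro k
      have hstep : ∫⁻ ω in {ω | N ω = k + nb}, g ω ∂μ
          = ∫⁻ _ω in {ω | N ω = k + nb}, ENNReal.ofReal ((2 : ℝ) ^ (k + nb + 1)) ∂μ := by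
        refine setLIntegral_congr_fun (hA _) (fun ω hω => ?_)
        have hωn : N ω = k + nb := hω
        rw [hg_def]
        simp [hωn]
      rw [hstep, setLIntegral_const, hgeo (k + nb) (by omega)]
      have : k + nb - nb = k := by omega
      rw [this, ← ENNReal.ofReal_mul (by positivity)]
      congr 1
      ring
    have hsum3 : Summable fun k : ℕ => r * (1 - r) ^ k * (2 : ℝ) ^ (k + nb + 1) := by
      have hgeo2 : Summable fun k : ℕ => (2 * (1 - r)) ^ k :=
        summable_geometric_of_lt_one (by linarith) (by linarith)
      have := (hgeo2.mul_left (r * (2 : ℝ) ^ (nb + 1)))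
      refine this.congr fun k => ?_
      rw [mul_pow]
      ring
    calc ∑' k : ℕ, ∫⁻ ω in {ω | N ω = k + nb}, g ω ∂μ
        = ∑' k : ℕ, ENNReal.ofReal (r * (1 - r) ^ k * (2 : ℝ) ^ (k + nb + 1)) :=
          tsum_congr hterm
      _ = ENNReal.ofReal (∑' k : ℕ, r * (1 - r) ^ k * (2 : ℝ) ^ (k + nb + 1)) :=
          (ENNReal.ofReal_tsum_of_nonneg (fun k => by positivity) hsum3).symm
      _ < ⊤ := ENNReal.ofReal_lt_top
end
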